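/- arXiv:2501.11055 — 6 statements merged into one kernel-verified Lean document; each statement's English description precedes it below -/
import Mathlib

section
/- Let R = ℂ[x₁,x₂,x₃,u₀,u₁,u₂] and let I_A ⊂ R be the ideal generated by x₁u₁−x₂u₀, x₁u₂−x₂u₁, x₁²−x₃u₀, x₁x₂−x₃u₁, x₂²−x₃u₂. Then I_A is a radical ideal; equivalently, the quotient ring A = R/I_A is reduced. -/
open MvPolynomial

/-- The ideal `I_A = (x₁u₁−x₂u₀, x₁u₂−x₂u₁, x₁²−x₃u₀, x₁x₂−x₃u₁, x₂²−x₃u₂)` of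
`R = ℂ[x₁,x₂,x₃,u₀,u₁,u₂]`. Variables: `x₁ = X 0`, `x₂ = X 1`, `x₃ = X 2`,
`u₀ = X 3`, `u₁ = X 4`, `u₂ = X 5`. -/
noncomputable def IA : Ideal (MvPolynomial (Fin 6) ℂ) :=
  Ideal.span {X 0 * X 4 - X 1 * X 3, X 0 * X 5 - X 1 * X 4,
    X 0 ^ 2 - X 2 * X 3, X 0 * X 1 - X 2 * X 4, X 1 ^ 2 - X 2 * X 5}

noncomputable section
namespace Stmt4Aux

abbrev S3 := MvPolynomial (Fin 3) ℂ
abbrev R6 := MvPolynomial (Fin 6) ℂ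

def phiU : S3 →ₐ[ℂ] R6 := aeval ![X 3, X 4, X 5]
def phiA : S3 →ₐ[ℂ] R6 := aeval ![X 2, X 3, X 5]

@[simp] lemma phiU_X0 : phiU (X 0) = X 3 := by simp [phiU]
@[simp] lemma phiU_X1 : phiU (X 1) = X 4 := by simp [phiU]
@[simp] lemma phiU_X2 : phiU (X 2) = X 5 := by simp [phiU]
@[simp] lemma phiA_X0 : phiA (X 0) = X 2 := by simp [phiA]
@[simp] lemma phiA_X1 : phiA (X 1) = X 3 := by simp [phiA]
@[simp] lemma phiA_X2 : phiA (X 2) = X 5 := by simp [phiA]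
@[simp] lemma phiU_C (a : ℂ) : phiU (C a) = C a := by simp [phiU, algebraMap_eq]
@[simp] lemma phiA_C (a : ℂ) : phiA (C a) = C a := by simp [phiA, algebraMap_eq]

/-- Normal form. -/
def NF (p₀ p₁ p₂ q r : S3) : R6 :=
  phiU p₀ + X 2 * phiA p₁ + X 2 * X 4 * phiA p₂ + X 0 * phiA q + X 1 * phiA r

lemma g1_mem : (X 0 * X 4 - X 1 * X 3 : R6) ∈ IA := Ideal.subset_span (by simp)
lemma g2_mem : (X 0 * X 5 - X 1 * X 4 : R6) ∈ IA := Ideal.subset_span (by simp)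
lemma g3_mem : (X 0 ^ 2 - X 2 * X 3 : R6) ∈ IA := Ideal.subset_span (by simp)
lemma g4_mem : (X 0 * X 1 - X 2 * X 4 : R6) ∈ IA := Ideal.subset_span (by simp)
lemma g5_mem : (X 1 ^ 2 - X 2 * X 5 : R6) ∈ IA := Ideal.subset_span (by simp)

lemma d1_mem : (X 2 * (X 4 ^ 2 - X 3 * X 5) : R6) ∈ IA := by
  have h : (X 2 * (X 4 ^ 2 - X 3 * X 5) : R6) =
      X 5 * (X 0 ^ 2 - X 2 * X 3) - X 4 * (X 0 * X 1 - X 2 * X 4)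
        - X 0 * (X 0 * X 5 - X 1 * X 4) := by ring
  rw [h]
  exact Ideal.sub_mem _ (Ideal.sub_mem _ (Ideal.mul_mem_left _ _ g3_mem)
    (Ideal.mul_mem_left _ _ g4_mem)) (Ideal.mul_mem_left _ _ g2_mem)

def Good (f : R6) : Prop := ∃ p₀ p₁ p₂ q r : S3, f - NF p₀ p₁ p₂ q r ∈ IA

lemma NF_zero : NF 0 0 0 0 0 = 0 := by simp [NF]

lemma good_nf (p₀ p₁ p₂ q r : S3) : Good (NF p₀ p₁ p₂ q r) :=
  ⟨p₀, p₁, p₂, q, r, by simp⟩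

lemma good_congr {f g : R6} (h : f - g ∈ IA) (hg : Good g) : Good f := by
  obtain ⟨p₀, p₁, p₂, q, r, hm⟩ := hg
  exact ⟨p₀, p₁, p₂, q, r, by have := Ideal.add_mem _ h hm; simpa [sub_add_sub_cancel] using this⟩

lemma good_add {f g : R6} (hf : Good f) (hg : Good g) : Good (f + g) := by
  obtain ⟨a₀, a₁, a₂, aq, ar, ha⟩ := hf
  obtain ⟨b₀, b₁, b₂, bq, br, hb⟩ := hg
  refine ⟨a₀ + b₀, a₁ + b₁, a₂ + b₂, aq + bq, ar + br, ?_⟩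
  have : f + g - (NF a₀ a₁ a₂ aq ar + NF b₀ b₁ b₂ bq br) ∈ IA := by
    have := Ideal.add_mem _ ha hb
    convert this using 1; ring
  convert this using 2
  simp [NF, map_add]; ring


/-- multiplication by u₀ = X 3 -/
lemma NF_mul_X3 (p₀ p₁ p₂ q r : S3) :
    NF p₀ p₁ p₂ q r * X 3 = NF (p₀ * X 0) (p₁ * X 1) (p₂ * X 1) (q * X 1) (r * X 1) := by
  simp only [NF, map_mul, phiU_X0, phiA_X1]; ring

/-- multiplication by u₂ = X 5 -/
lemma NF_mul_X5 (p₀ p₁ p₂ q r : S3) :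
    NF p₀ p₁ p₂ q r * X 5 = NF (p₀ * X 2) (p₁ * X 2) (p₂ * X 2) (q * X 2) (r * X 2) := by
  simp only [NF, map_mul, phiU_X2, phiA_X2]; ring

/-- multiplication by u₁ = X 4 -/
lemma NF_mul_X4 (p₀ p₁ p₂ q r : S3) :
    NF p₀ p₁ p₂ q r * X 4 - NF (p₀ * X 1) (p₂ * X 1 * X 2) p₁ (r * X 2) (q * X 1) =
      X 2 * (X 4 ^ 2 - X 3 * X 5) * phiA p₂ + (X 0 * X 4 - X 1 * X 3) * phiA q
        - (X 0 * X 5 - X 1 * X 4) * phiA r := by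
  simp only [NF, map_mul, phiU_X1, phiA_X1, phiA_X2]; ring

lemma good_mul_X3 {f : R6} (hf : Good f) : Good (f * X 3) := by
  obtain ⟨p₀, p₁, p₂, q, r, hm⟩ := hf
  refine good_congr (g := NF (p₀ * X 0) (p₁ * X 1) (p₂ * X 1) (q * X 1) (r * X 1)) ?_ (good_nf _ _ _ _ _)
  rw [← NF_mul_X3]
  have : f * X 3 - NF p₀ p₁ p₂ q r * X 3 = (f - NF p₀ p₁ p₂ q r) * X 3 := by ring
  rw [this]; exact Ideal.mul_mem_right _ _ hm

lemma good_mul_X5 {f : R6} (hf : Good f) : Good (f * X 5) := by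
  obtain ⟨p₀, p₁, p₂, q, r, hm⟩ := hf
  refine good_congr (g := NF (p₀ * X 2) (p₁ * X 2) (p₂ * X 2) (q * X 2) (r * X 2)) ?_ (good_nf _ _ _ _ _)
  rw [← NF_mul_X5]
  have : f * X 5 - NF p₀ p₁ p₂ q r * X 5 = (f - NF p₀ p₁ p₂ q r) * X 5 := by ring
  rw [this]; exact Ideal.mul_mem_right _ _ hm

lemma good_mul_X4 {f : R6} (hf : Good f) : Good (f * X 4) := by
  obtain ⟨p₀, p₁, p₂, q, r, hm⟩ := hf
  refine good_congr (g := NF (p₀ * X 1) (p₂ * X 1 * X 2) p₁ (r * X 2) (q * X 1)) ?_ (good_nf _ _ _ _ _)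
  have key : f * X 4 - NF (p₀ * X 1) (p₂ * X 1 * X 2) p₁ (r * X 2) (q * X 1) =
      (f - NF p₀ p₁ p₂ q r) * X 4 +
        (NF p₀ p₁ p₂ q r * X 4 - NF (p₀ * X 1) (p₂ * X 1 * X 2) p₁ (r * X 2) (q * X 1)) := by
    ring
  rw [key, NF_mul_X4]
  refine Ideal.add_mem _ (Ideal.mul_mem_right _ _ hm) ?_
  exact Ideal.sub_mem _ (Ideal.add_mem _ (Ideal.mul_mem_right _ _ d1_mem)
    (Ideal.mul_mem_right _ _ g1_mem)) (Ideal.mul_mem_right _ _ g2_mem)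


/-- `phiU p₀ * xᵢ` is Good, for the three x-variables, by induction on `p₀`. -/
lemma good_phiU_mul (y : R6) (hy : y = X 0 ∨ y = X 1 ∨ y = X 2)
    (p₀ : S3) : Good (phiU p₀ * y) := by
  induction p₀ using MvPolynomial.induction_on with
  | C a =>
      rcases hy with rfl | rfl | rfl
      · exact good_congr (g := NF 0 0 0 (C a) 0) (by simp [NF, mul_comm]) (good_nf _ _ _ _ _)
      · exact good_congr (g := NF 0 0 0 0 (C a)) (by simp [NF, mul_comm]) (good_nf _ _ _ _ _)
      · exact good_congr (g := NF 0 (C a) 0 0 0) (by simp [NF, mul_comm]) (good_nf _ _ _ _ _)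
  | add p q hp hq =>
      rw [map_add, add_mul]; exact good_add hp hq
  | mul_X p j hp =>
      have hcomm : phiU (p * X j) * y = (phiU p * y) * phiU (X j) := by
        rw [map_mul]; ring
      rw [hcomm]
      fin_cases j
      · show Good (phiU p * y * phiU (X 0)); rw [phiU_X0]; exact good_mul_X3 hp
      · show Good (phiU p * y * phiU (X 1)); rw [phiU_X1]; exact good_mul_X4 hp
      · show Good (phiU p * y * phiU (X 2)); rw [phiU_X2]; exact good_mul_X5 hp

lemma NF_mul_X2 (p₀ p₁ p₂ q r : S3) :
    NF p₀ p₁ p₂ q r * X 2 =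
      phiU p₀ * X 2 + NF 0 (p₁ * X 0) (p₂ * X 0) (q * X 0) (r * X 0) := by
  simp only [NF, map_mul, phiA_X0, map_zero]; ring

lemma NF_mul_X0 (p₀ p₁ p₂ q r : S3) :
    NF p₀ p₁ p₂ q r * X 0 -
        (phiU p₀ * X 0 + NF 0 (q * X 1) r (p₁ * X 0) (p₂ * X 0 * X 1)) =
      X 2 * phiA p₂ * (X 0 * X 4 - X 1 * X 3) + phiA q * (X 0 ^ 2 - X 2 * X 3)
        + phiA r * (X 0 * X 1 - X 2 * X 4) := by
  simp only [NF, map_mul, map_zero, phiA_X0, phiA_X1]; ring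

lemma NF_mul_X1 (p₀ p₁ p₂ q r : S3) :
    NF p₀ p₁ p₂ q r * X 1 -
        (phiU p₀ * X 1 + NF 0 (r * X 2) q (p₂ * X 0 * X 2) (p₁ * X 0)) =
      - (X 2 * phiA p₂ * (X 0 * X 5 - X 1 * X 4)) + phiA q * (X 0 * X 1 - X 2 * X 4)
        + phiA r * (X 1 ^ 2 - X 2 * X 5) := by
  simp only [NF, map_mul, map_zero, phiA_X0, phiA_X2]; ring

lemma good_mul_X2 {f : R6} (hf : Good f) : Good (f * X 2) := by
  obtain ⟨p₀, p₁, p₂, q, r, hm⟩ := hf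
  have h1 : f * X 2 - NF p₀ p₁ p₂ q r * X 2 ∈ IA := by
    have : f * X 2 - NF p₀ p₁ p₂ q r * X 2 = (f - NF p₀ p₁ p₂ q r) * X 2 := by ring
    rw [this]; exact Ideal.mul_mem_right _ _ hm
  refine good_congr h1 ?_
  rw [NF_mul_X2]
  exact good_add (good_phiU_mul _ (by tauto) _) (good_nf _ _ _ _ _)

lemma good_mul_X0 {f : R6} (hf : Good f) : Good (f * X 0) := by
  obtain ⟨p₀, p₁, p₂, q, r, hm⟩ := hf
  have h1 : f * X 0 - NF p₀ p₁ p₂ q r * X 0 ∈ IA := by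
    have : f * X 0 - NF p₀ p₁ p₂ q r * X 0 = (f - NF p₀ p₁ p₂ q r) * X 0 := by ring
    rw [this]; exact Ideal.mul_mem_right _ _ hm
  refine good_congr h1 ?_
  have h2 : NF p₀ p₁ p₂ q r * X 0 -
      (phiU p₀ * X 0 + NF 0 (q * X 1) r (p₁ * X 0) (p₂ * X 0 * X 1)) ∈ IA := by
    rw [NF_mul_X0]
    exact Ideal.add_mem _ (Ideal.add_mem _ (Ideal.mul_mem_left _ _ g1_mem)
      (Ideal.mul_mem_left _ _ g3_mem)) (Ideal.mul_mem_left _ _ g4_mem)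
  refine good_congr h2 ?_
  exact good_add (good_phiU_mul _ (by tauto) _) (good_nf _ _ _ _ _)

lemma good_mul_X1 {f : R6} (hf : Good f) : Good (f * X 1) := by
  obtain ⟨p₀, p₁, p₂, q, r, hm⟩ := hf
  have h1 : f * X 1 - NF p₀ p₁ p₂ q r * X 1 ∈ IA := by
    have : f * X 1 - NF p₀ p₁ p₂ q r * X 1 = (f - NF p₀ p₁ p₂ q r) * X 1 := by ring
    rw [this]; exact Ideal.mul_mem_right _ _ hm
  refine good_congr h1 ?_
  have h2 : NF p₀ p₁ p₂ q r * X 1 -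
      (phiU p₀ * X 1 + NF 0 (r * X 2) q (p₂ * X 0 * X 2) (p₁ * X 0)) ∈ IA := by
    rw [NF_mul_X1]
    refine Ideal.add_mem _ (Ideal.add_mem _ ?_ (Ideal.mul_mem_left _ _ g4_mem))
      (Ideal.mul_mem_left _ _ g5_mem)
    exact neg_mem (Ideal.mul_mem_left _ _ g2_mem)
  refine good_congr h2 ?_
  exact good_add (good_phiU_mul _ (by tauto) _) (good_nf _ _ _ _ _)

/-- Every polynomial has a normal form modulo `IA`. -/
lemma good_all (f : R6) : Good f := by
  induction f using MvPolynomial.induction_on with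
  | C a => exact good_congr (g := NF (C a) 0 0 0 0) (by simp [NF]) (good_nf _ _ _ _ _)
  | add p q hp hq => exact good_add hp hq
  | mul_X p j hp =>
      fin_cases j
      · exact good_mul_X0 hp
      · exact good_mul_X1 hp
      · exact good_mul_X2 hp
      · exact good_mul_X3 hp
      · exact good_mul_X4 hp
      · exact good_mul_X5 hp


/-! ### Part 2: evaluation maps -/

@[simp] lemma vec6_five {α : Type*} (a b c d e f : α) : ![a, b, c, d, e, f] 5 = f := rfl

def psi1 : R6 →ₐ[ℂ] S3 :=
  aeval ![X 0 * X 2, X 1 * X 2, X 2 ^ 2, X 0 ^ 2, X 0 * X 1, X 1 ^ 2]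
def psi2 : R6 →ₐ[ℂ] S3 := aeval ![0, 0, 0, X 0, X 1, X 2]
def Ebig : S3 →ₐ[ℂ] S3 := aeval ![X 2 ^ 2, X 0 ^ 2, X 1 ^ 2]

@[simp] lemma psi1_X0 : psi1 (X 0) = X 0 * X 2 := by simp [psi1]
@[simp] lemma psi1_X1 : psi1 (X 1) = X 1 * X 2 := by simp [psi1]
@[simp] lemma psi1_X2 : psi1 (X 2) = X 2 ^ 2 := by simp [psi1]
@[simp] lemma psi1_X3 : psi1 (X 3) = X 0 ^ 2 := by simp [psi1]
@[simp] lemma psi1_X4 : psi1 (X 4) = X 0 * X 1 := by simp [psi1]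
@[simp] lemma psi1_X5 : psi1 (X 5) = X 1 ^ 2 := by simp [psi1]
@[simp] lemma psi2_X0 : psi2 (X 0) = 0 := by simp [psi2]
@[simp] lemma psi2_X1 : psi2 (X 1) = 0 := by simp [psi2]
@[simp] lemma psi2_X2 : psi2 (X 2) = 0 := by simp [psi2]

lemma psi1_IA {f : R6} (hf : f ∈ IA) : psi1 f = 0 := by
  have hle : IA ≤ RingHom.ker psi1 := by
    rw [IA, Ideal.span_le]
    intro g hg
    simp only [Set.mem_insert_iff, Set.mem_singleton_iff] at hg
    rw [SetLike.mem_coe, RingHom.mem_ker]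
    rcases hg with rfl | rfl | rfl | rfl | rfl <;> · simp; ring
  exact hle hf

lemma psi2_IA {f : R6} (hf : f ∈ IA) : psi2 f = 0 := by
  have hle : IA ≤ RingHom.ker psi2 := by
    rw [IA, Ideal.span_le]
    intro g hg
    simp only [Set.mem_insert_iff, Set.mem_singleton_iff] at hg
    rw [SetLike.mem_coe, RingHom.mem_ker]
    rcases hg with rfl | rfl | rfl | rfl | rfl <;> · simp
  exact hle hf

lemma psi1_phiA (p : S3) : psi1 (phiA p) = Ebig p := by
  have hfun : (fun i => psi1 (![X 2, X 3, X 5] i)) = ![X 2 ^ 2, X 0 ^ 2, X 1 ^ 2] := by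
    funext i; fin_cases i <;> simp
  rw [phiA, ← AlgHom.comp_apply, comp_aeval, hfun, Ebig]

lemma psi2_phiU (p : S3) : psi2 (phiU p) = p := by
  have hfun : (fun i => psi2 (![X 3, X 4, X 5] i)) = (X : Fin 3 → S3) := by
    funext i; fin_cases i <;> simp [psi2]
  rw [phiU, ← AlgHom.comp_apply, comp_aeval, hfun]
  simp [aeval_X_left]

lemma psi2_NF (p₀ p₁ p₂ q r : S3) : psi2 (NF p₀ p₁ p₂ q r) = p₀ := by
  simp [NF, psi2_phiU]

lemma psi1_NF (p₀ p₁ p₂ q r : S3) (h : p₀ = 0) :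
    psi1 (NF p₀ p₁ p₂ q r) =
      X 2 ^ 2 * Ebig p₁ + X 0 * X 1 * X 2 ^ 2 * Ebig p₂
        + X 0 * X 2 * Ebig q + X 1 * X 2 * Ebig r := by
  subst h
  simp only [NF, map_add, map_mul, map_zero, psi1_X0, psi1_X1, psi1_X2, psi1_X4, psi1_phiA]
  ring

def Ev (α β γ : ℂ) : S3 →ₐ[ℂ] ℂ := aeval ![α, β, γ]

@[simp] lemma Ev_X0 (α β γ : ℂ) : Ev α β γ (X 0) = α := by simp [Ev]
@[simp] lemma Ev_X1 (α β γ : ℂ) : Ev α β γ (X 1) = β := by simp [Ev]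
@[simp] lemma Ev_X2 (α β γ : ℂ) : Ev α β γ (X 2) = γ := by simp [Ev]

lemma Ev_eval (x : Fin 3 → ℂ) (p : S3) : eval x p = Ev (x 0) (x 1) (x 2) p := by
  have hvec : ![x 0, x 1, x 2] = x := by funext i; fin_cases i <;> rfl
  rw [Ev, hvec, ← coe_aeval_eq_eval]; rfl

lemma Ev_Ebig (α β γ : ℂ) (p : S3) : Ev α β γ (Ebig p) = Ev (γ ^ 2) (α ^ 2) (β ^ 2) p := by
  have hfun : (fun i => Ev α β γ (![X 2 ^ 2, X 0 ^ 2, X 1 ^ 2] i)) = ![γ ^ 2, α ^ 2, β ^ 2] := by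
    funext i; fin_cases i <;> simp [Ev]
  rw [Ebig, ← AlgHom.comp_apply, comp_aeval, hfun, Ev]


lemma ebig_zero {p : S3} (h : Ebig p = 0) : p = 0 := by
  apply MvPolynomial.funext (q := 0)
  intro x
  obtain ⟨γ, hγ⟩ := IsAlgClosed.exists_pow_nat_eq (x 0) (n := 2) (by norm_num)
  obtain ⟨α, hα⟩ := IsAlgClosed.exists_pow_nat_eq (x 1) (n := 2) (by norm_num)
  obtain ⟨β, hβ⟩ := IsAlgClosed.exists_pow_nat_eq (x 2) (n := 2) (by norm_num)
  have hvec : x = ![γ ^ 2, α ^ 2, β ^ 2] := by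
    funext i; fin_cases i <;> simp [hγ.symm, hα.symm, hβ.symm]
  have h0 : Ev (γ ^ 2) (α ^ 2) (β ^ 2) p = 0 := by
    rw [← Ev_Ebig α β γ p, h, map_zero]
  have hx : eval x p = 0 := by
    rw [hvec]; exact (Ev_eval _ p).trans h0
  simp [hx]

lemma kill (m : S3) (hm : m ≠ 0) (p : S3)
    (h : ∀ α β γ : ℂ, Ev α β γ m * Ev (γ ^ 2) (α ^ 2) (β ^ 2) p = 0) : p = 0 := by
  have hME : m * Ebig p = 0 := by
    apply MvPolynomial.funext (q := 0)
    intro x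
    rw [map_mul, map_zero (eval x), Ev_eval x m, Ev_eval x (Ebig p), Ev_Ebig]
    exact h (x 0) (x 1) (x 2)
  rcases mul_eq_zero.mp hME with h' | h'
  · exact absurd h' hm
  · exact ebig_zero h'

lemma nf_eq_zero {p₀ p₁ p₂ q r : S3}
    (h1 : psi1 (NF p₀ p₁ p₂ q r) = 0) (h2 : psi2 (NF p₀ p₁ p₂ q r) = 0) :
    NF p₀ p₁ p₂ q r = 0 := by
  have hp₀ : p₀ = 0 := by rw [psi2_NF] at h2; exact h2
  have hF : X 2 ^ 2 * Ebig p₁ + X 0 * X 1 * X 2 ^ 2 * Ebig p₂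
      + X 0 * X 2 * Ebig q + X 1 * X 2 * Ebig r = 0 := by
    rw [← psi1_NF p₀ p₁ p₂ q r hp₀]; exact h1
  have hpt : ∀ α β γ : ℂ,
      γ ^ 2 * Ev (γ ^ 2) (α ^ 2) (β ^ 2) p₁
        + α * β * γ ^ 2 * Ev (γ ^ 2) (α ^ 2) (β ^ 2) p₂
        + α * γ * Ev (γ ^ 2) (α ^ 2) (β ^ 2) q
        + β * γ * Ev (γ ^ 2) (α ^ 2) (β ^ 2) r = 0 := by
    intro α β γ
    have := congrArg (Ev α β γ) hF
    simpa [map_add, map_mul, map_pow, Ev_Ebig, mul_assoc] using this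
  have hX0 : (X 0 : S3) ≠ 0 := X_ne_zero 0
  have hX1 : (X 1 : S3) ≠ 0 := X_ne_zero 1
  have hX2 : (X 2 : S3) ≠ 0 := X_ne_zero 2
  have hp₁ : p₁ = 0 := by
    apply kill (X 2 ^ 2) (pow_ne_zero _ hX2)
    intro α β γ
    have e1 := hpt α β γ; have e2 := hpt (-α) β γ
    have e3 := hpt α (-β) γ; have e4 := hpt (-α) (-β) γ
    simp only [neg_sq] at e2 e3 e4
    have hEv : Ev α β γ (X 2 ^ 2) = γ ^ 2 := by simp [Ev]
    rw [hEv]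
    linear_combination (e1 + e2 + e3 + e4) / 4
  have hp₂ : p₂ = 0 := by
    apply kill (X 0 * X 1 * X 2 ^ 2) (by
      exact mul_ne_zero (mul_ne_zero hX0 hX1) (pow_ne_zero _ hX2))
    intro α β γ
    have e1 := hpt α β γ; have e2 := hpt (-α) β γ
    have e3 := hpt α (-β) γ; have e4 := hpt (-α) (-β) γ
    simp only [neg_sq] at e2 e3 e4
    have hEv : Ev α β γ (X 0 * X 1 * X 2 ^ 2) = α * β * γ ^ 2 := by simp [Ev]
    rw [hEv]
    linear_combination (e1 - e2 - e3 + e4) / 4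
  have hq : q = 0 := by
    apply kill (X 0 * X 2) (mul_ne_zero hX0 hX2)
    intro α β γ
    have e1 := hpt α β γ; have e2 := hpt (-α) β γ
    have e3 := hpt α (-β) γ; have e4 := hpt (-α) (-β) γ
    simp only [neg_sq] at e2 e3 e4
    have hEv : Ev α β γ (X 0 * X 2) = α * γ := by simp [Ev]
    rw [hEv]
    linear_combination (e1 - e2 + e3 - e4) / 4
  have hr : r = 0 := by
    apply kill (X 1 * X 2) (mul_ne_zero hX1 hX2)
    intro α β γ
    have e1 := hpt α β γ; have e2 := hpt (-α) β γ
    have e3 := hpt α (-β) γ; have e4 := hpt (-α) (-β) γ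
    simp only [neg_sq] at e2 e3 e4
    have hEv : Ev α β γ (X 1 * X 2) = β * γ := by simp [Ev]
    rw [hEv]
    linear_combination (e1 + e2 - e3 - e4) / 4
  rw [hp₀, hp₁, hp₂, hq, hr, NF_zero]

lemma sq_mem {f : R6} (hf : f ^ 2 ∈ IA) : f ∈ IA := by
  obtain ⟨p₀, p₁, p₂, q, r, hm⟩ := good_all f
  set N := NF p₀ p₁ p₂ q r with hN
  have hN2 : N ^ 2 ∈ IA := by
    have hdiff : f ^ 2 - N ^ 2 = (f - N) * (f + N) := by ring
    have h1 : f ^ 2 - N ^ 2 ∈ IA := by rw [hdiff]; exact Ideal.mul_mem_right _ _ hm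
    have := Ideal.sub_mem _ hf h1
    simpa using this
  have h1 : psi1 N = 0 := by
    have := psi1_IA hN2
    rw [map_pow] at this
    exact pow_eq_zero_iff (two_ne_zero) |>.mp this
  have h2 : psi2 N = 0 := by
    have := psi2_IA hN2
    rw [map_pow] at this
    exact pow_eq_zero_iff (two_ne_zero) |>.mp this
  have hNz : N = 0 := nf_eq_zero h1 h2
  rw [hNz, sub_zero] at hm
  exact hm

end Stmt4Aux

/-- `I_A` is a radical ideal; equivalently, `A = R/I_A` is reduced. -/
theorem stmt4 : IA.IsRadical ∧ IsReduced (MvPolynomial (Fin 6) ℂ ⧸ IA) := by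
  have hrad : IA.IsRadical :=
    (Ideal.isRadical_iff_pow_one_lt 2 one_lt_two).mpr fun r h => Stmt4Aux.sq_mem h
  exact ⟨hrad, (Ideal.isRadical_iff_quotient_reduced IA).mp hrad⟩
end
end

section
/- Let R = ℂ[x₁,x₂,x₃,u₀,u₁,u₂] and let I_A ⊂ R be the ideal generated by x₁u₁−x₂u₀, x₁u₂−x₂u₁, x₁²−x₃u₀, x₁x₂−x₃u₁, x₂²−x₃u₂. Then the prime ideals of R that are minimal over I_A are exactly the two ideals P = (x₁, x₂, x₃) and I_B = I_A + (u₀u₂−u₁²); in particular, the quotient A = R/I_A has exactly two minimal primes. -/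
open MvPolynomial

noncomputable abbrev QQ : Ideal (MvPolynomial (Fin 6) ℂ) :=
  IA ⊔ Ideal.span {X 3 * X 5 - X 4 ^ 2}
noncomputable def M (a b c d e f : ℕ) : MvPolynomial (Fin 6) ℂ :=
  X 0 ^ a * X 1 ^ b * X 2 ^ c * X 3 ^ d * X 4 ^ e * X 5 ^ f

lemma hg1 : (X 0 * X 4 - X 1 * X 3 : MvPolynomial (Fin 6) ℂ) ∈ QQ :=
  Ideal.mem_sup_left (Ideal.subset_span (by simp))
lemma hg2 : (X 0 * X 5 - X 1 * X 4 : MvPolynomial (Fin 6) ℂ) ∈ QQ :=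
  Ideal.mem_sup_left (Ideal.subset_span (by simp))
lemma hg3 : (X 0 ^ 2 - X 2 * X 3 : MvPolynomial (Fin 6) ℂ) ∈ QQ :=
  Ideal.mem_sup_left (Ideal.subset_span (by simp))
lemma hg4 : (X 0 * X 1 - X 2 * X 4 : MvPolynomial (Fin 6) ℂ) ∈ QQ :=
  Ideal.mem_sup_left (Ideal.subset_span (by simp))
lemma hg5 : (X 1 ^ 2 - X 2 * X 5 : MvPolynomial (Fin 6) ℂ) ∈ QQ :=
  Ideal.mem_sup_left (Ideal.subset_span (by simp))
lemma hg6 : (X 3 * X 5 - X 4 ^ 2 : MvPolynomial (Fin 6) ℂ) ∈ QQ :=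
  Ideal.mem_sup_right (Ideal.subset_span rfl)

lemma R1 (a b c d e f : ℕ) : M (a+2) b c d e f - M a b (c+1) (d+1) e f ∈ QQ := by
  have : M (a+2) b c d e f - M a b (c+1) (d+1) e f
      = M a b c d e f * (X 0 ^ 2 - X 2 * X 3) := by unfold M; ring
  rw [this]; exact Ideal.mul_mem_left _ _ hg3
lemma R2 (a b c d e f : ℕ) : M (a+1) (b+1) c d e f - M a b (c+1) d (e+1) f ∈ QQ := by
  have : M (a+1) (b+1) c d e f - M a b (c+1) d (e+1) f
      = M a b c d e f * (X 0 * X 1 - X 2 * X 4) := by unfold M; ring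
  rw [this]; exact Ideal.mul_mem_left _ _ hg4
lemma R3 (a b c d e f : ℕ) : M a (b+2) c d e f - M a b (c+1) d e (f+1) ∈ QQ := by
  have : M a (b+2) c d e f - M a b (c+1) d e (f+1)
      = M a b c d e f * (X 1 ^ 2 - X 2 * X 5) := by unfold M; ring
  rw [this]; exact Ideal.mul_mem_left _ _ hg5
lemma R4 (a b c d e f : ℕ) : M (a+1) b c d (e+1) f - M a (b+1) c (d+1) e f ∈ QQ := by
  have : M (a+1) b c d (e+1) f - M a (b+1) c (d+1) e f
      = M a b c d e f * (X 0 * X 4 - X 1 * X 3) := by unfold M; ring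
  rw [this]; exact Ideal.mul_mem_left _ _ hg1
lemma R5 (a b c d e f : ℕ) : M (a+1) b c d e (f+1) - M a (b+1) c d (e+1) f ∈ QQ := by
  have : M (a+1) b c d e (f+1) - M a (b+1) c d (e+1) f
      = M a b c d e f * (X 0 * X 5 - X 1 * X 4) := by unfold M; ring
  rw [this]; exact Ideal.mul_mem_left _ _ hg2
lemma R6 (a b c d e f : ℕ) : M a b c d (e+2) f - M a b c (d+1) e (f+1) ∈ QQ := by
  have : M a b c d (e+2) f - M a b c (d+1) e (f+1)
      = -(M a b c d e f * (X 3 * X 5 - X 4 ^ 2)) := by unfold M; ring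
  rw [this]; exact neg_mem (Ideal.mul_mem_left _ _ hg6)

lemma QQtrans {p q r : MvPolynomial (Fin 6) ℂ} (h1 : p - q ∈ QQ) (h2 : q - r ∈ QQ) :
    p - r ∈ QQ := by
  have := add_mem h1 h2; simpa using this

lemma red_e : ∀ j b c d e f, M 0 b c d (e + 2*j) f - M 0 b c (d+j) e (f+j) ∈ QQ := by
  intro j
  induction j with
  | zero => intro b c d e f; simp
  | succ j ih =>
    intro b c d e f
    have h1 : M 0 b c d (e + 2*(j+1)) f - M 0 b c (d+1) (e + 2*j) (f+1) ∈ QQ := by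
      have := R6 0 b c d (e + 2*j) f
      have he : e + 2*(j+1) = e + 2*j + 2 := by ring
      rwa [he]
    have h2 := ih b c (d+1) e (f+1)
    have hd : d + 1 + j = d + (j+1) := by ring
    have hf : f + 1 + j = f + (j+1) := by ring
    rw [hd, hf] at h2
    exact QQtrans h1 h2

lemma norm_e (b c d e f : ℕ) : ∃ d' e' f', e' ≤ 1 ∧ 2*d'+e' = 2*d+e ∧ e'+2*f' = e+2*f ∧
    M 0 b c d e f - M 0 b c d' e' f' ∈ QQ := by
  refine ⟨d + e/2, e % 2, f + e/2, by omega, by omega, by omega, ?_⟩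
  have := red_e (e/2) b c d (e % 2) f
  have he : e % 2 + 2 * (e/2) = e := by omega
  rwa [he] at this

lemma red_ab : ∀ s a b c d e f, a + b ≤ s → ∃ a' b' c' d' e' f', a' + b' ≤ 1 ∧
    a' + 2*d' + e' = a + 2*d + e ∧ b' + e' + 2*f' = b + e + 2*f ∧
    a' + b' + 2*c' = a + b + 2*c ∧
    M a b c d e f - M a' b' c' d' e' f' ∈ QQ := by
  intro s
  induction s with
  | zero =>
    intro a b c d e f h
    exact ⟨a, b, c, d, e, f, by omega, rfl, rfl, rfl, by simp⟩
  | succ s ih =>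
    intro a b c d e f h
    by_cases hab : a + b ≤ 1
    · exact ⟨a, b, c, d, e, f, hab, rfl, rfl, rfl, by simp⟩
    by_cases ha : 2 ≤ a
    · obtain ⟨a'', rfl⟩ : ∃ t, a = t + 2 := ⟨a - 2, by omega⟩
      obtain ⟨a', b', c', d', e', f', h1, h2, h3, h4, h5⟩ :=
        ih a'' b (c+1) (d+1) e f (by omega)
      exact ⟨a', b', c', d', e', f', h1, by omega, by omega, by omega,
        QQtrans (R1 a'' b c d e f) h5⟩
    by_cases hb : 2 ≤ b
    · obtain ⟨b'', rfl⟩ : ∃ t, b = t + 2 := ⟨b - 2, by omega⟩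
      obtain ⟨a', b', c', d', e', f', h1, h2, h3, h4, h5⟩ :=
        ih a b'' (c+1) d e (f+1) (by omega)
      exact ⟨a', b', c', d', e', f', h1, by omega, by omega, by omega,
        QQtrans (R3 a b'' c d e f) h5⟩
    · obtain ⟨a'', rfl⟩ : ∃ t, a = t + 1 := ⟨a - 1, by omega⟩
      obtain ⟨b'', rfl⟩ : ∃ t, b = t + 1 := ⟨b - 1, by omega⟩
      obtain ⟨a', b', c', d', e', f', h1, h2, h3, h4, h5⟩ :=
        ih a'' b'' (c+1) d (e+1) f (by omega)
      exact ⟨a', b', c', d', e', f', h1, by omega, by omega, by omega,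
        QQtrans (R2 a'' b'' c d e f) h5⟩

lemma normalizeM (a b c d e f : ℕ) : ∃ a' b' c' d' e' f',
    (a' + b' ≤ 1) ∧ (a' = 1 → e' = 0 ∧ f' = 0) ∧ e' ≤ 1 ∧
    a' + 2*d' + e' = a + 2*d + e ∧ b' + e' + 2*f' = b + e + 2*f ∧
    a' + b' + 2*c' = a + b + 2*c ∧
    M a b c d e f - M a' b' c' d' e' f' ∈ QQ := by
  obtain ⟨a₁, b₁, c₁, d₁, e₁, f₁, h1, h2, h3, h4, h5⟩ := red_ab (a+b) a b c d e f le_rfl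
  rcases Nat.eq_zero_or_pos a₁ with ha | ha
  · subst ha
    obtain ⟨d', e', f', he, k1, k2, k3⟩ := norm_e b₁ c₁ d₁ e₁ f₁
    exact ⟨0, b₁, c₁, d', e', f', by omega, by omega, he, by omega, by omega, by omega,
      QQtrans h5 k3⟩
  · have ha1 : a₁ = 1 := by omega
    subst ha1
    have hb1 : b₁ = 0 := by omega
    subst hb1
    by_cases hf : 1 ≤ f₁
    · obtain ⟨f'', rfl⟩ : ∃ t, f₁ = t + 1 := ⟨f₁ - 1, by omega⟩
      have hR := R5 0 0 c₁ d₁ e₁ f''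
      obtain ⟨d', e', f', he, k1, k2, k3⟩ := norm_e 1 c₁ d₁ (e₁+1) f''
      exact ⟨0, 1, c₁, d', e', f', by omega, by omega, he, by omega, by omega, by omega,
        QQtrans h5 (QQtrans hR k3)⟩
    by_cases hee : 1 ≤ e₁
    · obtain ⟨e'', rfl⟩ : ∃ t, e₁ = t + 1 := ⟨e₁ - 1, by omega⟩
      have hR := R4 0 0 c₁ d₁ e'' f₁
      obtain ⟨d', e', f', he, k1, k2, k3⟩ := norm_e 1 c₁ (d₁+1) e'' f₁
      exact ⟨0, 1, c₁, d', e', f', by omega, by omega, he, by omega, by omega, by omega,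
        QQtrans h5 (QQtrans hR k3)⟩
    · have he1 : e₁ = 0 := by omega
      have hf1 : f₁ = 0 := by omega
      subst he1; subst hf1
      exact ⟨1, 0, c₁, d₁, 0, 0, by omega, fun _ => ⟨rfl, rfl⟩, by omega,
        by omega, by omega, by omega, h5⟩

noncomputable def ψ : MvPolynomial (Fin 6) ℂ →ₐ[ℂ] MvPolynomial (Fin 3) ℂ :=
  aeval ![X 0 * X 2, X 1 * X 2, X 2 ^ 2, X 0 ^ 2, X 0 * X 1, X 1 ^ 2]

lemma ψ0 : ψ (X 0) = X 0 * X 2 := aeval_X _ 0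
lemma ψ1 : ψ (X 1) = X 1 * X 2 := aeval_X _ 1
lemma ψ2 : ψ (X 2) = X 2 ^ 2 := aeval_X _ 2
lemma ψ3 : ψ (X 3) = X 0 ^ 2 := aeval_X _ 3
lemma ψ4 : ψ (X 4) = X 0 * X 1 := aeval_X _ 4
lemma ψ5 : ψ (X 5) = X 1 ^ 2 := aeval_X _ 5

lemma psi_M (a b c d e f : ℕ) :
    ψ (M a b c d e f) =
      X 0 ^ (a + 2*d + e) * X 1 ^ (b + e + 2*f) * X 2 ^ (a + b + 2*c) := by
  simp only [M, map_mul, map_pow, ψ0, ψ1, ψ2, ψ3, ψ4, ψ5]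
  ring

noncomputable def stm (m : Fin 6 →₀ ℕ) : Fin 3 →₀ ℕ :=
  Finsupp.equivFunOnFinite.symm
    ![m 0 + 2 * m 3 + m 4, m 1 + m 4 + 2 * m 5, m 0 + m 1 + 2 * m 2]

lemma stm_apply (m : Fin 6 →₀ ℕ) :
    stm m 0 = m 0 + 2 * m 3 + m 4 ∧ stm m 1 = m 1 + m 4 + 2 * m 5 ∧
      stm m 2 = m 0 + m 1 + 2 * m 2 :=
  ⟨rfl, rfl, rfl⟩

lemma mono_eq_M (m : Fin 6 →₀ ℕ) :
    (monomial m 1 : MvPolynomial (Fin 6) ℂ) = M (m 0) (m 1) (m 2) (m 3) (m 4) (m 5) := by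
  rw [monomial_eq, Finsupp.prod_fintype _ _ (fun i => pow_zero _), Fin.prod_univ_six]
  simp [M]

lemma mono3_eq (n : Fin 3 →₀ ℕ) :
    (monomial n 1 : MvPolynomial (Fin 3) ℂ) = X 0 ^ n 0 * X 1 ^ n 1 * X 2 ^ n 2 := by
  rw [monomial_eq, Finsupp.prod_fintype _ _ (fun i => pow_zero _), Fin.prod_univ_three]
  simp

lemma psi_mono (m : Fin 6 →₀ ℕ) (c : ℂ) :
    ψ (monomial m c) = monomial (stm m) c := by
  have h1 : (monomial m c : MvPolynomial (Fin 6) ℂ) = C c * monomial m 1 := by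
    rw [C_mul_monomial, mul_one]
  have h2 : (monomial (stm m) c : MvPolynomial (Fin 3) ℂ) = C c * monomial (stm m) 1 := by
    rw [C_mul_monomial, mul_one]
  rw [h1, h2, map_mul, mono_eq_M, psi_M, mono3_eq,
    (stm_apply m).1, (stm_apply m).2.1, (stm_apply m).2.2]
  congr 1
  simp [ψ, aeval_C, algebraMap_eq]

def NormalF (m : Fin 6 →₀ ℕ) : Prop :=
  m 0 + m 1 ≤ 1 ∧ (m 0 = 1 → m 4 = 0 ∧ m 5 = 0) ∧ m 4 ≤ 1

lemma stm_inj {m n : Fin 6 →₀ ℕ} (hm : NormalF m) (hn : NormalF n)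
    (h : stm m = stm n) : m = n := by
  have h' := congrArg (Finsupp.equivFunOnFinite) h
  simp only [stm, Equiv.apply_symm_apply] at h'
  have h0 := congrFun h' 0
  have h1 := congrFun h' 1
  have h2 := congrFun h' 2
  simp only [Matrix.cons_val_zero, Matrix.cons_val_one, Matrix.head_cons,
    Matrix.cons_val_two, Matrix.tail_cons] at h0 h1 h2
  obtain ⟨hm1, hm2, hm3⟩ := hm
  obtain ⟨hn1, hn2, hn3⟩ := hn
  ext i
  fin_cases i
  all_goals simp
  all_goals omega

lemma normalize_monomial (m : Fin 6 →₀ ℕ) :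
    ∃ n, NormalF n ∧ stm n = stm m ∧
      (monomial m 1 - monomial n 1 : MvPolynomial (Fin 6) ℂ) ∈ QQ := by
  obtain ⟨a', b', c', d', e', f', h1, h2, h3, k1, k2, k3, hQ⟩ :=
    normalizeM (m 0) (m 1) (m 2) (m 3) (m 4) (m 5)
  refine ⟨Finsupp.equivFunOnFinite.symm ![a', b', c', d', e', f'], ?_, ?_, ?_⟩
  · refine ⟨?_, ?_, ?_⟩
    · show a' + b' ≤ 1; exact h1
    · show a' = 1 → e' = 0 ∧ f' = 0; exact h2
    · show e' ≤ 1; exact h3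
  · refine Finsupp.ext fun i => ?_
    fin_cases i
    · show a' + 2 * d' + e' = m 0 + 2 * m 3 + m 4; omega
    · show b' + e' + 2 * f' = m 1 + m 4 + 2 * m 5; omega
    · show a' + b' + 2 * c' = m 0 + m 1 + 2 * m 2; omega
  · rw [mono_eq_M, mono_eq_M]
    show M (m 0) (m 1) (m 2) (m 3) (m 4) (m 5) - M a' b' c' d' e' f' ∈ QQ
    exact hQ

lemma normal_part (p : MvPolynomial (Fin 6) ℂ) :
    ∃ g, p - g ∈ QQ ∧ (∀ m ∈ g.support, NormalF m) ∧ ψ g = ψ p := by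
  induction p using MvPolynomial.induction_on' with
  | monomial u a =>
    obtain ⟨n, hn, hstm, hQ⟩ := normalize_monomial u
    refine ⟨monomial n a, ?_, ?_, ?_⟩
    · have : (monomial u a - monomial n a : MvPolynomial (Fin 6) ℂ)
          = C a * (monomial u 1 - monomial n 1) := by
        rw [mul_sub, C_mul_monomial, C_mul_monomial, mul_one]
      rw [this]
      exact Ideal.mul_mem_left _ _ hQ
    · intro m hm
      rw [MvPolynomial.support_monomial] at hm
      split at hm
      · simp at hm
      · simp at hm; subst hm; exact hn
    · rw [psi_mono, psi_mono, hstm]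
  | add p q ihp ihq =>
    obtain ⟨gp, hp1, hp2, hp3⟩ := ihp
    obtain ⟨gq, hq1, hq2, hq3⟩ := ihq
    refine ⟨gp + gq, ?_, ?_, ?_⟩
    · have : p + q - (gp + gq) = (p - gp) + (q - gq) := by ring
      rw [this]; exact add_mem hp1 hq1
    · intro m hm
      rcases Finset.mem_union.mp (MvPolynomial.support_add hm) with h | h
      · exact hp2 m h
      · exact hq2 m h
    · rw [map_add, map_add, hp3, hq3]

lemma normal_zero {g : MvPolynomial (Fin 6) ℂ} (hg : ∀ m ∈ g.support, NormalF m)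
    (h0 : ψ g = 0) : g = 0 := by
  by_contra hne
  obtain ⟨m, hm⟩ := MvPolynomial.support_nonempty.mpr hne
  have hsum : ψ g = ∑ m' ∈ g.support, monomial (stm m') (MvPolynomial.coeff m' g) := by
    conv_lhs => rw [g.as_sum]
    rw [map_sum]
    exact Finset.sum_congr rfl fun m' _ => psi_mono m' _
  have hcoeff : MvPolynomial.coeff (stm m) (ψ g) = MvPolynomial.coeff m g := by
    rw [hsum, MvPolynomial.coeff_sum]
    rw [Finset.sum_eq_single_of_mem m hm]
    · rw [MvPolynomial.coeff_monomial, if_pos rfl]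
    · intro m' hm' hne'
      rw [MvPolynomial.coeff_monomial, if_neg]
      intro heq
      exact hne' (stm_inj (hg m' hm') (hg m hm) heq)
  rw [h0] at hcoeff
  simp only [MvPolynomial.coeff_zero] at hcoeff
  exact (MvPolynomial.mem_support_iff.mp hm) hcoeff.symm

lemma ker_le_QQ : RingHom.ker ψ.toRingHom ≤ QQ := by
  intro p hp
  rw [RingHom.mem_ker] at hp
  obtain ⟨g, h1, h2, h3⟩ := normal_part p
  have : g = 0 := normal_zero h2 (by rw [h3]; exact hp)
  rw [this, sub_zero] at h1
  exact h1

noncomputable def φ : MvPolynomial (Fin 6) ℂ →ₐ[ℂ] MvPolynomial (Fin 3) ℂ :=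
  aeval ![0, 0, 0, X 0, X 1, X 2]

lemma φ0 : φ (X 0) = 0 := aeval_X _ 0
lemma φ1 : φ (X 1) = 0 := aeval_X _ 1
lemma φ2 : φ (X 2) = 0 := aeval_X _ 2
lemma φ3 : φ (X 3) = X 0 := aeval_X _ 3
lemma φ4 : φ (X 4) = X 1 := aeval_X _ 4
lemma φ5 : φ (X 5) = X 2 := aeval_X _ 5

lemma phiM (a b c d e f : ℕ) :
    φ (M a b c d e f) = 0^a * 0^b * 0^c * X 0 ^ d * X 1 ^ e * X 2 ^ f := by
  simp only [M, map_mul, map_pow, φ0, φ1, φ2, φ3, φ4, φ5]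

noncomputable def stp (m : Fin 6 →₀ ℕ) : Fin 3 →₀ ℕ :=
  Finsupp.equivFunOnFinite.symm ![m 3, m 4, m 5]

lemma phi_mono_pure (m : Fin 6 →₀ ℕ) (c : ℂ) (h0 : m 0 = 0) (h1 : m 1 = 0)
    (h2 : m 2 = 0) : φ (monomial m c) = monomial (stp m) c := by
  have hc : (monomial m c : MvPolynomial (Fin 6) ℂ) = C c * monomial m 1 := by
    rw [C_mul_monomial, mul_one]
  have hc2 : (monomial (stp m) c : MvPolynomial (Fin 3) ℂ) = C c * monomial (stp m) 1 := by
    rw [C_mul_monomial, mul_one]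
  rw [hc, hc2, map_mul, mono_eq_M, h0, h1, h2, phiM, mono3_eq]
  refine congrArg₂ (· * ·) ?_ ?_
  · simp [φ, aeval_C, algebraMap_eq]
  · show 0^0 * 0^0 * 0^0 * X 0 ^ m 3 * X 1 ^ m 4 * X 2 ^ m 5
        = X 0 ^ stp m 0 * X 1 ^ stp m 1 * X 2 ^ stp m 2
    have e0 : stp m 0 = m 3 := rfl
    have e1 : stp m 1 = m 4 := rfl
    have e2 : stp m 2 = m 5 := rfl
    rw [e0, e1, e2]; ring

lemma phi_mono_impure (m : Fin 6 →₀ ℕ) (c : ℂ)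
    (h : ¬ (m 0 = 0 ∧ m 1 = 0 ∧ m 2 = 0)) : φ (monomial m c) = 0 := by
  have hc : (monomial m c : MvPolynomial (Fin 6) ℂ) = C c * monomial m 1 := by
    rw [C_mul_monomial, mul_one]
  rw [hc, map_mul, mono_eq_M, phiM]
  rcases not_and_or.mp h with h' | h'
  · rw [zero_pow h']; ring
  rcases not_and_or.mp h' with h'' | h''
  · rw [zero_pow h'']; ring
  · rw [zero_pow h'']; ring

noncomputable abbrev PP : Ideal (MvPolynomial (Fin 6) ℂ) :=
  Ideal.span {X 0, X 1, X 2}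

lemma PP_le_ker : PP ≤ RingHom.ker φ.toRingHom := by
  rw [Ideal.span_le]
  rintro p hp
  simp only [Set.mem_insert_iff, Set.mem_singleton_iff] at hp
  rcases hp with rfl | rfl | rfl <;>
    simp only [SetLike.mem_coe, RingHom.mem_ker, AlgHom.toRingHom_eq_coe, RingHom.coe_coe,
      φ0, φ1, φ2]

lemma mem_PP_iff {p : MvPolynomial (Fin 6) ℂ} :
    p ∈ PP ↔ ∀ m ∈ p.support, ∃ i ∈ ({0, 1, 2} : Set (Fin 6)), m i ≠ 0 := by
  have himg : (X '' {0, 1, 2} : Set (MvPolynomial (Fin 6) ℂ)) = {X 0, X 1, X 2} := by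
    simp [Set.image_insert_eq]
  rw [show PP = Ideal.span (X '' {0,1,2}) by rw [himg]]
  exact mem_ideal_span_X_image

lemma ker_le_PP : RingHom.ker φ.toRingHom ≤ PP := by
  intro p hp
  rw [RingHom.mem_ker] at hp
  rw [mem_PP_iff]
  by_contra hcon
  push_neg at hcon
  obtain ⟨m, hm, hpure⟩ := hcon
  have h0 : m 0 = 0 := hpure 0 (by simp)
  have h1 : m 1 = 0 := hpure 1 (by simp)
  have h2 : m 2 = 0 := hpure 2 (by simp)
  have hsum : φ p = ∑ m' ∈ p.support, φ (monomial m' (MvPolynomial.coeff m' p)) := by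
    conv_lhs => rw [p.as_sum]
    rw [map_sum]
  have hcoeff : MvPolynomial.coeff (stp m) (φ p) = MvPolynomial.coeff m p := by
    rw [hsum, MvPolynomial.coeff_sum]
    rw [Finset.sum_eq_single_of_mem m hm]
    · rw [phi_mono_pure m _ h0 h1 h2, MvPolynomial.coeff_monomial, if_pos rfl]
    · intro m' hm' hne'
      by_cases hp' : m' 0 = 0 ∧ m' 1 = 0 ∧ m' 2 = 0
      · rw [phi_mono_pure m' _ hp'.1 hp'.2.1 hp'.2.2, MvPolynomial.coeff_monomial, if_neg]
        intro heq
        apply hne'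
        have h' := congrArg (Finsupp.equivFunOnFinite) heq
        simp only [stp, Equiv.apply_symm_apply] at h'
        have e3 := congrFun h' 0
        have e4 := congrFun h' 1
        have e5 := congrFun h' 2
        simp only [Matrix.cons_val_zero, Matrix.cons_val_one, Matrix.head_cons,
          Matrix.cons_val_two, Matrix.tail_cons] at e3 e4 e5
        ext i
        fin_cases i
        · show m' 0 = m 0; rw [hp'.1, h0]
        · show m' 1 = m 1; rw [hp'.2.1, h1]
        · show m' 2 = m 2; rw [hp'.2.2, h2]
        · show m' 3 = m 3; exact e3
        · show m' 4 = m 4; exact e4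
        · show m' 5 = m 5; exact e5
      · rw [phi_mono_impure m' _ hp', MvPolynomial.coeff_zero]
  have hp2 : φ p = 0 := hp
  rw [hp2] at hcoeff
  simp only [MvPolynomial.coeff_zero] at hcoeff
  exact (MvPolynomial.mem_support_iff.mp hm) hcoeff.symm

lemma IA_le_kerψ : IA ≤ RingHom.ker ψ.toRingHom := by
  rw [IA, Ideal.span_le]
  rintro p hp
  simp only [Set.mem_insert_iff, Set.mem_singleton_iff] at hp
  rcases hp with rfl | rfl | rfl | rfl | rfl <;>
  · simp only [SetLike.mem_coe, RingHom.mem_ker, AlgHom.toRingHom_eq_coe, RingHom.coe_coe,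
      map_sub, map_mul, map_pow, ψ0, ψ1, ψ2, ψ3, ψ4, ψ5]
    ring

lemma QQ_le_kerψ : QQ ≤ RingHom.ker ψ.toRingHom := by
  rw [sup_le_iff]
  refine ⟨IA_le_kerψ, ?_⟩
  rw [Ideal.span_le]
  rintro p hp
  rw [Set.mem_singleton_iff] at hp
  subst hp
  simp only [SetLike.mem_coe, RingHom.mem_ker, AlgHom.toRingHom_eq_coe, RingHom.coe_coe,
    map_sub, map_mul, map_pow, ψ3, ψ4, ψ5]
  ring

lemma QQ_eq_ker : QQ = RingHom.ker ψ.toRingHom := le_antisymm QQ_le_kerψ ker_le_QQ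

lemma QQ_prime : QQ.IsPrime := QQ_eq_ker ▸ RingHom.ker_isPrime _

lemma PP_eq_ker : PP = RingHom.ker φ.toRingHom := le_antisymm PP_le_ker ker_le_PP

lemma PP_prime : PP.IsPrime := PP_eq_ker ▸ RingHom.ker_isPrime _

lemma IA_le_PP : IA ≤ PP := by
  have hx0 : (X 0 : MvPolynomial (Fin 6) ℂ) ∈ PP := Ideal.subset_span (by simp)
  have hx1 : (X 1 : MvPolynomial (Fin 6) ℂ) ∈ PP := Ideal.subset_span (by simp)
  have hx2 : (X 2 : MvPolynomial (Fin 6) ℂ) ∈ PP := Ideal.subset_span (by simp)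
  rw [IA, Ideal.span_le]
  rintro p hp
  simp only [Set.mem_insert_iff, Set.mem_singleton_iff] at hp
  rcases hp with rfl | rfl | rfl | rfl | rfl
  · exact sub_mem (Ideal.mul_mem_right _ _ hx0) (Ideal.mul_mem_right _ _ hx1)
  · exact sub_mem (Ideal.mul_mem_right _ _ hx0) (Ideal.mul_mem_right _ _ hx1)
  · exact sub_mem (by rw [sq]; exact Ideal.mul_mem_right _ _ hx0)
      (Ideal.mul_mem_right _ _ hx2)
  · exact sub_mem (Ideal.mul_mem_right _ _ hx0) (Ideal.mul_mem_right _ _ hx2)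
  · exact sub_mem (by rw [sq]; exact Ideal.mul_mem_right _ _ hx1)
      (Ideal.mul_mem_right _ _ hx2)

lemma g_not_mem_PP : (X 3 * X 5 - X 4 ^ 2 : MvPolynomial (Fin 6) ℂ) ∉ PP := by
  intro h
  rw [PP_eq_ker, RingHom.mem_ker] at h
  have h' : φ (X 3 * X 5 - X 4 ^ 2) = 0 := h
  rw [map_sub, map_mul, map_pow, φ3, φ4, φ5] at h'
  have := congrArg (eval ![0, 1, 0]) h'
  simp at this

lemma X2_not_mem_QQ : (X 2 : MvPolynomial (Fin 6) ℂ) ∉ QQ := by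
  intro h
  rw [QQ_eq_ker, RingHom.mem_ker] at h
  have h' : ψ (X 2) = 0 := h
  rw [ψ2] at h'
  have := congrArg (eval ![0, 0, 1]) h'
  simp at this

lemma X2_mem_PP : (X 2 : MvPolynomial (Fin 6) ℂ) ∈ PP := Ideal.subset_span (by simp)

lemma g_mem_QQ : (X 3 * X 5 - X 4 ^ 2 : MvPolynomial (Fin 6) ℂ) ∈ QQ := hg6

-- multiples of g in IA
lemma X0_mul_g : (X 0 * (X 3 * X 5 - X 4 ^ 2) : MvPolynomial (Fin 6) ℂ) ∈ IA := by
  have h1 : (X 0 * X 4 - X 1 * X 3 : MvPolynomial (Fin 6) ℂ) ∈ IA :=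
    Ideal.subset_span (by simp)
  have h2 : (X 0 * X 5 - X 1 * X 4 : MvPolynomial (Fin 6) ℂ) ∈ IA :=
    Ideal.subset_span (by simp)
  have : (X 0 * (X 3 * X 5 - X 4 ^ 2) : MvPolynomial (Fin 6) ℂ)
      = X 3 * (X 0 * X 5 - X 1 * X 4) - X 4 * (X 0 * X 4 - X 1 * X 3) := by ring
  rw [this]
  exact sub_mem (Ideal.mul_mem_left _ _ h2) (Ideal.mul_mem_left _ _ h1)

lemma X1_mul_g : (X 1 * (X 3 * X 5 - X 4 ^ 2) : MvPolynomial (Fin 6) ℂ) ∈ IA := by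
  have h1 : (X 0 * X 4 - X 1 * X 3 : MvPolynomial (Fin 6) ℂ) ∈ IA :=
    Ideal.subset_span (by simp)
  have h2 : (X 0 * X 5 - X 1 * X 4 : MvPolynomial (Fin 6) ℂ) ∈ IA :=
    Ideal.subset_span (by simp)
  have : (X 1 * (X 3 * X 5 - X 4 ^ 2) : MvPolynomial (Fin 6) ℂ)
      = X 4 * (X 0 * X 5 - X 1 * X 4) - X 5 * (X 0 * X 4 - X 1 * X 3) := by ring
  rw [this]
  exact sub_mem (Ideal.mul_mem_left _ _ h2) (Ideal.mul_mem_left _ _ h1)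

lemma X2_mul_g : (X 2 * (X 3 * X 5 - X 4 ^ 2) : MvPolynomial (Fin 6) ℂ) ∈ IA := by
  have h2 : (X 0 * X 5 - X 1 * X 4 : MvPolynomial (Fin 6) ℂ) ∈ IA :=
    Ideal.subset_span (by simp)
  have h3 : (X 0 ^ 2 - X 2 * X 3 : MvPolynomial (Fin 6) ℂ) ∈ IA :=
    Ideal.subset_span (by simp)
  have h4 : (X 0 * X 1 - X 2 * X 4 : MvPolynomial (Fin 6) ℂ) ∈ IA :=
    Ideal.subset_span (by simp)
  have : (X 2 * (X 3 * X 5 - X 4 ^ 2) : MvPolynomial (Fin 6) ℂ)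
      = X 4 * (X 0 * X 1 - X 2 * X 4) - X 5 * (X 0 ^ 2 - X 2 * X 3)
        + X 0 * (X 0 * X 5 - X 1 * X 4) := by ring
  rw [this]
  exact add_mem (sub_mem (Ideal.mul_mem_left _ _ h4) (Ideal.mul_mem_left _ _ h3))
    (Ideal.mul_mem_left _ _ h2)

lemma prime_cases {p : Ideal (MvPolynomial (Fin 6) ℂ)} (hp : p.IsPrime)
    (hIA : IA ≤ p) : PP ≤ p ∨ QQ ≤ p := by
  by_cases hg : (X 3 * X 5 - X 4 ^ 2 : MvPolynomial (Fin 6) ℂ) ∈ p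
  · right
    exact sup_le hIA ((Ideal.span_le).mpr (by simpa using hg))
  · left
    rw [Ideal.span_le]
    rintro q hq
    simp only [Set.mem_insert_iff, Set.mem_singleton_iff] at hq
    rcases hq with rfl | rfl | rfl
    · rcases hp.mem_or_mem (hIA X0_mul_g) with h | h
      · exact h
      · exact absurd h hg
    · rcases hp.mem_or_mem (hIA X1_mul_g) with h | h
      · exact h
      · exact absurd h hg
    · rcases hp.mem_or_mem (hIA X2_mul_g) with h | h
      · exact h
      · exact absurd h hg

/-- The prime ideals of `R` minimal over `I_A` are exactly `P = (x₁,x₂,x₃)` and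
`I_B = I_A + (u₀u₂ − u₁²)`; in particular `A = R/I_A` has exactly two minimal primes. -/
theorem stmt5 :
    IA.minimalPrimes =
      {Ideal.span {X 0, X 1, X 2},
       IA ⊔ Ideal.span {X 3 * X 5 - X 4 ^ 2}} := by
  ext p
  simp only [Set.mem_insert_iff, Set.mem_singleton_iff]
  constructor
  · intro h
    have h' : Minimal (fun q : Ideal (MvPolynomial (Fin 6) ℂ) => q.IsPrime ∧ IA ≤ q) p := h
    rcases prime_cases h'.1.1 h'.1.2 with hle | hle
    · left; exact le_antisymm (h'.2 ⟨PP_prime, IA_le_PP⟩ hle) hle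
    · right; exact le_antisymm (h'.2 ⟨QQ_prime, le_sup_left⟩ hle) hle
  · rintro (rfl | rfl)
    · show Minimal (fun q : Ideal (MvPolynomial (Fin 6) ℂ) => q.IsPrime ∧ IA ≤ q) PP
      refine ⟨⟨PP_prime, IA_le_PP⟩, ?_⟩
      intro q hq hle
      rcases prime_cases hq.1 hq.2 with h | h
      · exact h
      · exact absurd (hle (h g_mem_QQ)) g_not_mem_PP
    · show Minimal (fun q : Ideal (MvPolynomial (Fin 6) ℂ) => q.IsPrime ∧ IA ≤ q) QQ
      refine ⟨⟨QQ_prime, le_sup_left⟩, ?_⟩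
      intro q hq hle
      rcases prime_cases hq.1 hq.2 with h | h
      · exact absurd (hle (h X2_mem_PP)) X2_not_mem_QQ
      · exact h
end

section
/- Let n ≥ 2 be an integer, R = ℂ[x₁,…,xₙ] the polynomial ring, and J ⊂ R the ideal J = (x₃,…,xₙ) + (x₁,x₂)², i.e. the ideal generated by x₁², x₁x₂, x₂², x₃, …, xₙ. Then for every integer ℓ ≥ 1, the quotient R/J^ℓ is a finite-dimensional ℂ-vector space of dimension 3·C(n+ℓ−1, n) + C(n+ℓ−2, n), where C(a,b) denotes the binomial coefficient. -/
open MvPolynomial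

/-- The ideal `J = (x₃,…,xₙ) + (x₁,x₂)²` of `R = ℂ[x₁,…,xₙ]`, i.e. the ideal generated by
`x₁², x₁x₂, x₂², x₃, …, xₙ`. Variables: `xₖ = X ⟨k-1⟩` for `k = 1, …, n`. -/
noncomputable def Jid (n : ℕ) : Ideal (MvPolynomial (Fin n) ℂ) :=
  Ideal.span {p | ∃ k : Fin n, 2 ≤ (k : ℕ) ∧ p = X k} ⊔
    (Ideal.span {p | ∃ k : Fin n, (k : ℕ) < 2 ∧ p = X k}) ^ 2


open Finsupp
noncomputable section

variable {n : ℕ}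

def tl (d : Fin n →₀ ℕ) : ℕ := ∑ i : Fin n, if 2 ≤ (i : ℕ) then d i else 0
def hd (d : Fin n →₀ ℕ) : ℕ := ∑ i : Fin n, if (i : ℕ) < 2 then d i else 0
def w (d : Fin n →₀ ℕ) : ℕ := tl d + hd d / 2

lemma tl_add (d e : Fin n →₀ ℕ) : tl (d + e) = tl d + tl e := by
  simp only [tl, Finsupp.coe_add, Pi.add_apply]
  rw [← Finset.sum_add_distrib]
  exact Finset.sum_congr rfl fun i _ => by split <;> simp

lemma hd_add (d e : Fin n →₀ ℕ) : hd (d + e) = hd d + hd e := by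
  simp only [hd, Finsupp.coe_add, Pi.add_apply]
  rw [← Finset.sum_add_distrib]
  exact Finset.sum_congr rfl fun i _ => by split <;> simp

lemma w_superadd (d e : Fin n →₀ ℕ) : w d + w e ≤ w (d + e) := by
  simp only [w, tl_add, hd_add]; omega

lemma sum_eq_tl_add_hd (d : Fin n →₀ ℕ) : (∑ i : Fin n, d i) = tl d + hd d := by
  simp only [tl, hd, ← Finset.sum_add_distrib]
  exact Finset.sum_congr rfl fun i _ => by
    rcases lt_or_ge ((i : ℕ)) 2 with h | h
    · rw [if_neg (by omega), if_pos h]; omega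
    · rw [if_pos h, if_neg (by omega)]; omega

def i0 (hn : 2 ≤ n) : Fin n := ⟨0, by omega⟩
def i1 (hn : 2 ≤ n) : Fin n := ⟨1, by omega⟩

lemma i0_ne_i1 (hn : 2 ≤ n) : i0 hn ≠ i1 hn := by
  simp only [i0, i1, Ne, Fin.ext_iff]
  omega

lemma hd_eq (hn : 2 ≤ n) (d : Fin n →₀ ℕ) : hd d = d (i0 hn) + d (i1 hn) := by
  classical
  have h : ∀ i : Fin n, (if (i : ℕ) < 2 then d i else 0)
      = if i ∈ ({i0 hn, i1 hn} : Finset (Fin n)) then d i else 0 := by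
    intro i
    congr 1
    simp only [Finset.mem_insert, Finset.mem_singleton, Fin.ext_iff, i0, i1, eq_iff_iff]
    omega
  rw [hd, Finset.sum_congr rfl fun i _ => h i]
  rw [Finset.sum_ite_mem, Finset.univ_inter, Finset.sum_pair (i0_ne_i1 hn)]

lemma tl_update (d : Fin n →₀ ℕ) (j : Fin n) (hj : (j : ℕ) < 2) (a : ℕ) :
    tl (d.update j a) = tl d := by
  classical
  refine Finset.sum_congr rfl fun i _ => ?_
  rcases le_or_gt 2 ((i : ℕ)) with h | h
  · rw [if_pos h, if_pos h]
    have hij : i ≠ j := by intro e; subst e; omega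
    simp [Finsupp.coe_update, Function.update, hij]
  · rw [if_neg (by omega), if_neg (by omega)]

lemma update_apply' (d : Fin n →₀ ℕ) (j : Fin n) (a : ℕ) (i : Fin n) :
    d.update j a i = if i = j then a else d i := by
  classical
  simp [Finsupp.coe_update, Function.update]

/-- Splitting off parities of the first two coordinates. -/
def Φ (hn : 2 ≤ n) : (Fin n →₀ ℕ) ≃ (Fin n →₀ ℕ) × (Fin 2 × Fin 2) where
  toFun d := ((d.update (i0 hn) (d (i0 hn) / 2)).update (i1 hn) (d (i1 hn) / 2),
      (⟨d (i0 hn) % 2, Nat.mod_lt _ (by norm_num)⟩,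
       ⟨d (i1 hn) % 2, Nat.mod_lt _ (by norm_num)⟩))
  invFun x := (x.1.update (i0 hn) (2 * x.1 (i0 hn) + (x.2.1 : ℕ))).update (i1 hn)
      (2 * x.1 (i1 hn) + (x.2.2 : ℕ))
  left_inv d := by
    have hne : i0 hn ≠ i1 hn := i0_ne_i1 hn
    ext i
    simp only [update_apply']
    rcases eq_or_ne i (i1 hn) with rfl | h1
    · simp [update_apply', Ne.symm hne]
      omega
    · rcases eq_or_ne i (i0 hn) with rfl | h0
      · simp [update_apply', h1]
        omega
      · simp [update_apply', h0, h1]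
  right_inv x := by
    obtain ⟨q, r0, r1⟩ := x
    have hne : i0 hn ≠ i1 hn := i0_ne_i1 hn
    have hr0 : (r0 : ℕ) < 2 := r0.2
    have hr1 : (r1 : ℕ) < 2 := r1.2
    simp only [Prod.mk.injEq]
    refine ⟨?_, ?_, ?_⟩
    · ext i
      simp only [update_apply']
      rcases eq_or_ne i (i1 hn) with rfl | h1
      · simp [update_apply', Ne.symm hne]
        omega
      rcases eq_or_ne i (i0 hn) with rfl | h0
      · simp [update_apply', h1, hne]
        omega
      · simp [update_apply', h0, h1]
    · ext
      simp [update_apply', hne, Ne.symm hne]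
      omega
    · ext
      simp [update_apply']
      omega

lemma w_symm_Φ (hn : 2 ≤ n) (q : Fin n →₀ ℕ) (r : Fin 2 × Fin 2) :
    w ((Φ hn).symm (q, r)) = (∑ i : Fin n, q i) + ((r.1 : ℕ) + (r.2 : ℕ)) / 2 := by
  obtain ⟨r0, r1⟩ := r
  have hne : i0 hn ≠ i1 hn := i0_ne_i1 hn
  have htl : tl (((Φ hn).symm (q, (r0, r1))) : Fin n →₀ ℕ) = tl q := by
    show tl ((q.update _ _).update _ _) = _
    rw [tl_update _ _ (by simp [i1]), tl_update _ _ (by simp [i0])]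
  have hhd : hd (((Φ hn).symm (q, (r0, r1))) : Fin n →₀ ℕ)
      = 2 * q (i0 hn) + (r0 : ℕ) + (2 * q (i1 hn) + (r1 : ℕ)) := by
    rw [hd_eq hn]
    show ((q.update _ _).update _ _) (i0 hn) + ((q.update _ _).update _ _) (i1 hn) = _
    simp [update_apply', hne, Ne.symm hne]
  rw [w, htl, hhd, sum_eq_tl_add_hd, hd_eq hn]
  dsimp only
  have hr0 : (r0 : ℕ) < 2 := r0.2
  have hr1 : (r1 : ℕ) < 2 := r1.2
  omega

section Ideals
open MvPolynomial
variable {n : ℕ}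

/-- The ideal of polynomials all of whose monomials satisfy `P`. -/
def sIdeal (P : (Fin n →₀ ℕ) → Prop) (hP : ∀ d e, P d → P (e + d)) :
    Ideal (MvPolynomial (Fin n) ℂ) where
  carrier := {p | ∀ d ∈ p.support, P d}
  add_mem' := by
    classical
    intro p q hp hq d hd
    rcases Finset.mem_union.1 (MvPolynomial.support_add hd) with h | h
    · exact hp d h
    · exact hq d h
  zero_mem' := by
    intro d hd
    simp [MvPolynomial.support_zero] at hd
  smul_mem' := by
    classical
    intro c p hp d hd
    rw [smul_eq_mul] at hd
    rcases Finset.mem_add.1 (MvPolynomial.support_mul c p hd) with ⟨a, _, b, hb, rfl⟩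
    exact hP b a (hp b hb)

lemma mem_sIdeal {P hP} {p : MvPolynomial (Fin n) ℂ} :
    p ∈ sIdeal P hP ↔ ∀ d ∈ p.support, P d := Iff.rfl

def Iw (ℓ : ℕ) : Ideal (MvPolynomial (Fin n) ℂ) :=
  sIdeal (fun d => ℓ ≤ w d) (fun d e h =>
    le_trans (le_trans h (Nat.le_add_left _ _)) (w_superadd e d))

def Ih : Ideal (MvPolynomial (Fin n) ℂ) :=
  sIdeal (fun d => 1 ≤ hd d) (fun d e h => by show 1 ≤ hd (e + d); rw [hd_add]; omega)

lemma tl_single (k : Fin n) (a : ℕ) : tl (single k a) = if 2 ≤ (k : ℕ) then a else 0 := by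
  rw [tl, Finset.sum_eq_single_of_mem k (Finset.mem_univ k)]
  · rw [Finsupp.single_eq_same]
  · intro i _ hik
    rw [Finsupp.single_eq_of_ne' (Ne.symm hik)]
    split <;> rfl

lemma hd_single (k : Fin n) (a : ℕ) : hd (single k a) = if (k : ℕ) < 2 then a else 0 := by
  rw [hd, Finset.sum_eq_single_of_mem k (Finset.mem_univ k)]
  · rw [Finsupp.single_eq_same]
  · intro i _ hik
    rw [Finsupp.single_eq_of_ne' (Ne.symm hik)]
    split <;> rfl

lemma X_mem_Ih {k : Fin n} (hk : (k : ℕ) < 2) : (X k : MvPolynomial (Fin n) ℂ) ∈ Ih := by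
  intro d hd
  rw [MvPolynomial.support_X, Finset.mem_singleton] at hd
  subst hd
  rw [hd_single, if_pos hk]

lemma span_sq_le_Iw1 :
    (Ideal.span {p : MvPolynomial (Fin n) ℂ | ∃ k : Fin n, (k : ℕ) < 2 ∧ p = X k}) ^ 2 ≤ Iw 1 := by
  rw [pow_two]
  refine Ideal.mul_le.2 fun r hr s hs => ?_
  have hr' : r ∈ Ih := Ideal.span_le.2 (by rintro _ ⟨k, hk, rfl⟩; exact X_mem_Ih hk) hr
  have hs' : s ∈ Ih := Ideal.span_le.2 (by rintro _ ⟨k, hk, rfl⟩; exact X_mem_Ih hk) hs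
  classical
  intro d hd
  rcases Finset.mem_add.1 (MvPolynomial.support_mul r s hd) with ⟨a, ha, b, hb, rfl⟩
  have h1 := hr' a ha
  have h2 := hs' b hb
  rw [w, hd_add]
  omega

lemma Jid_le_Iw1 : Jid n ≤ Iw 1 := by
  rw [Jid]
  refine sup_le ?_ span_sq_le_Iw1
  refine Ideal.span_le.2 ?_
  rintro _ ⟨k, hk, rfl⟩
  intro d hd
  rw [MvPolynomial.support_X, Finset.mem_singleton] at hd
  subst hd
  rw [w, tl_single, if_pos hk]
  omega

lemma Jid_pow_le_Iw (ℓ : ℕ) : Jid n ^ ℓ ≤ Iw ℓ := by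
  induction ℓ with
  | zero => intro p _ d _; exact Nat.zero_le _
  | succ ℓ ih =>
    rw [pow_succ]
    refine Ideal.mul_le.2 fun r hr s hs => ?_
    have h1 := ih hr
    have h2 := Jid_le_Iw1 hs
    classical
    intro d hd
    rcases Finset.mem_add.1 (MvPolynomial.support_mul r s hd) with ⟨a, ha, b, hb, rfl⟩
    have := w_superadd a b
    have := h1 a ha
    have := h2 b hb
    omega

lemma X_mem_spanlt {k : Fin n} (hk : (k : ℕ) < 2) :
    (X k : MvPolynomial (Fin n) ℂ) ∈
      Ideal.span {p : MvPolynomial (Fin n) ℂ | ∃ k : Fin n, (k : ℕ) < 2 ∧ p = X k} :=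
  Ideal.subset_span ⟨k, hk, rfl⟩

lemma pair_mem_Jid {k j : Fin n} (hk : (k : ℕ) < 2) (hj : (j : ℕ) < 2) :
    (X k * X j : MvPolynomial (Fin n) ℂ) ∈ Jid n := by
  refine le_sup_right (α := Ideal (MvPolynomial (Fin n) ℂ)) ?_
  rw [pow_two]
  exact Ideal.mul_mem_mul (X_mem_spanlt hk) (X_mem_spanlt hj)

lemma monomial_mem (hn : 2 ≤ n) : ∀ ℓ (d : Fin n →₀ ℕ), ℓ ≤ w d →
    (monomial d 1 : MvPolynomial (Fin n) ℂ) ∈ Jid n ^ ℓ := by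
  intro ℓ
  induction ℓ with
  | zero => intro d _; simp
  | succ ℓ ih =>
    intro d hwd
    by_cases hex : ∃ k : Fin n, 2 ≤ (k : ℕ) ∧ d k ≠ 0
    · obtain ⟨k, hk2, hk0⟩ := hex
      set e := d.update k (d k - 1) with he
      have hde : d = e + single k 1 := by
        ext i
        rw [Finsupp.add_apply, update_apply']
        rcases eq_or_ne i k with rfl | h
        · rw [if_pos rfl, Finsupp.single_eq_same]; omega
        · rw [if_neg h, Finsupp.single_eq_of_ne' (Ne.symm h), add_zero]
      have hwe : ℓ ≤ w e := by
        have h1 : tl d = tl e + 1 := by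
          rw [hde, tl_add, tl_single, if_pos hk2]
        have h2 : hd d = hd e := by
          rw [hde, hd_add, hd_single, if_neg (by omega)]
          omega
        rw [w] at hwd ⊢
        omega
      have : (monomial d 1 : MvPolynomial (Fin n) ℂ) = monomial e 1 * X k := by
        rw [hde]
        show _ = _ * monomial (single k 1) 1
        rw [monomial_mul, one_mul]
      rw [this, pow_succ]
      exact Ideal.mul_mem_mul (ih e hwe)
        (le_sup_left (α := Ideal (MvPolynomial (Fin n) ℂ))
          (Ideal.subset_span ⟨k, hk2, rfl⟩))
    · push_neg at hex
      have htl : tl d = 0 := by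
        rw [tl]
        refine Finset.sum_eq_zero fun i _ => ?_
        split
        · exact hex i ‹_›
        · rfl
      have hhd : 2 ≤ hd d := by
        rw [w, htl] at hwd
        omega
      have hdd := hd_eq hn d
      -- now: find the quadratic generator
      have key : ∀ u : Fin n →₀ ℕ, hd u = 2 → tl u = 0 →
          (∀ i, u i ≤ d i) →
          (monomial u 1 : MvPolynomial (Fin n) ℂ) ∈ Jid n →
          (monomial d 1 : MvPolynomial (Fin n) ℂ) ∈ Jid n ^ (ℓ + 1) := by
        intro u hu htlu hle hmem
        set e : Fin n →₀ ℕ := d - u with he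
        have hde : d = e + u := by
          ext i
          rw [Finsupp.add_apply, he, Finsupp.tsub_apply]
          have := hle i
          omega
        have hwe : ℓ ≤ w e := by
          have h1 : tl d = tl e := by rw [hde, tl_add, htlu, add_zero]
          have h2 : hd d = hd e + 2 := by rw [hde, hd_add, hu]
          rw [w] at hwd ⊢
          omega
        have hmon : (monomial d 1 : MvPolynomial (Fin n) ℂ) = monomial e 1 * monomial u 1 := by
          rw [hde, monomial_mul, one_mul]
        rw [hmon, pow_succ]
        exact Ideal.mul_mem_mul (ih e hwe) hmem
      have h0lt : ((i0 hn : Fin n) : ℕ) < 2 := by simp [i0]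
      have h1lt : ((i1 hn : Fin n) : ℕ) < 2 := by simp [i1]
      have hne := i0_ne_i1 hn
      rcases le_or_gt 2 (d (i0 hn)) with hc | hc
      · refine key (single (i0 hn) 2) ?_ ?_ ?_ ?_
        · rw [hd_single, if_pos h0lt]
        · rw [tl_single, if_neg (by omega)]
        · intro i
          rcases eq_or_ne i (i0 hn) with rfl | h
          · rw [Finsupp.single_eq_same]; omega
          · rw [Finsupp.single_eq_of_ne' (Ne.symm h)]; omega
        · have : (monomial (single (i0 hn) 2) 1 : MvPolynomial (Fin n) ℂ)
              = X (i0 hn) * X (i0 hn) := by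
            show _ = monomial (single (i0 hn) 1) 1 * monomial (single (i0 hn) 1) 1
            rw [monomial_mul, one_mul, ← Finsupp.single_add]
          rw [this]
          exact pair_mem_Jid h0lt h0lt
      rcases le_or_gt 2 (d (i1 hn)) with hc1 | hc1
      · refine key (single (i1 hn) 2) ?_ ?_ ?_ ?_
        · rw [hd_single, if_pos h1lt]
        · rw [tl_single, if_neg (by omega)]
        · intro i
          rcases eq_or_ne i (i1 hn) with rfl | h
          · rw [Finsupp.single_eq_same]; omega
          · rw [Finsupp.single_eq_of_ne' (Ne.symm h)]; omega
        · have : (monomial (single (i1 hn) 2) 1 : MvPolynomial (Fin n) ℂ)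
              = X (i1 hn) * X (i1 hn) := by
            show _ = monomial (single (i1 hn) 1) 1 * monomial (single (i1 hn) 1) 1
            rw [monomial_mul, one_mul, ← Finsupp.single_add]
          rw [this]
          exact pair_mem_Jid h1lt h1lt
      · refine key (single (i0 hn) 1 + single (i1 hn) 1) ?_ ?_ ?_ ?_
        · rw [hd_add, hd_single, hd_single, if_pos h0lt, if_pos h1lt]
        · rw [tl_add, tl_single, tl_single, if_neg (by omega), if_neg (by omega)]
        · intro i
          rw [Finsupp.add_apply]
          rcases eq_or_ne i (i0 hn) with rfl | h
          · rw [Finsupp.single_eq_same, Finsupp.single_eq_of_ne' (Ne.symm hne)]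
            omega
          rcases eq_or_ne i (i1 hn) with rfl | h1
          · rw [Finsupp.single_eq_same, Finsupp.single_eq_of_ne' hne]
            omega
          · rw [Finsupp.single_eq_of_ne' (Ne.symm h), Finsupp.single_eq_of_ne' (Ne.symm h1)]
            omega
        · have : (monomial (single (i0 hn) 1 + single (i1 hn) 1) 1 : MvPolynomial (Fin n) ℂ)
              = X (i0 hn) * X (i1 hn) := by
            show _ = monomial (single (i0 hn) 1) 1 * monomial (single (i1 hn) 1) 1
            rw [monomial_mul, one_mul]
          rw [this]
          exact pair_mem_Jid h0lt h1lt

lemma pow_restrict (hn : 2 ≤ n) (ℓ : ℕ) :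
    Submodule.restrictScalars ℂ (Jid n ^ ℓ) = restrictSupport ℂ {d : Fin n →₀ ℕ | ℓ ≤ w d} := by
  apply le_antisymm
  · intro p hp
    have := Jid_pow_le_Iw ℓ hp
    exact fun d hd => this d hd
  · rw [restrictSupport_eq_span, Submodule.span_le]
    rintro _ ⟨d, hd, rfl⟩
    show (monomial d 1 : MvPolynomial (Fin n) ℂ) ∈ Jid n ^ ℓ
    exact monomial_mem hn ℓ d hd

end Ideals


section Count


/-- Finsupps with value-sum `m` correspond to multisets of size `m`. -/
def equivSymAux (α : Type*) [DecidableEq α] (m : ℕ) :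
    {d : α →₀ ℕ // (d.sum fun _ e => e) = m} ≃ Sym α m :=
  Equiv.subtypeEquiv Multiset.toFinsupp.toEquiv.symm (fun d => by
    have h : (Multiset.toFinsupp.toEquiv.symm d : Multiset α) = Finsupp.toMultiset d := rfl
    have h2 : Multiset.card (Finsupp.toMultiset d) = d.sum fun _ e => e :=
      Finsupp.card_toMultiset d
    show _ ↔ Multiset.card _ = m
    rw [h, h2])

/-- Padding: finsupps on `α` with sum ≤ m correspond to finsupps on `Option α` with sum = m. -/
def equivPad (α : Type*) (m : ℕ) :
    {d : α →₀ ℕ // (d.sum fun _ e => e) ≤ m} ≃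
      {e : Option α →₀ ℕ // (e.sum fun _ e => e) = m} where
  toFun d := ⟨Finsupp.mapDomain Option.some d.1 +
      Finsupp.single none (m - d.1.sum fun _ e => e), by
    rw [Finsupp.sum_add_index' (fun _ => rfl) (fun _ _ _ => rfl),
      Finsupp.sum_mapDomain_index (fun _ => rfl) (fun _ _ _ => rfl),
      Finsupp.sum_single_index rfl]
    have := d.2
    omega⟩
  invFun e := ⟨e.1.some, by
    have h : (e.1.sum fun _ x => x) = e.1 none + e.1.some.sum fun _ x => x :=
      Finsupp.sum_option_index e.1 (fun _ e => e) (fun _ => rfl) (fun _ _ _ => rfl)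
    have := e.2
    omega⟩
  left_inv d := by
    ext a
    simp [Finsupp.mapDomain_apply (Option.some_injective α)]
  right_inv e := by
    have hs : (e.1.sum fun _ x => x) = e.1 none + e.1.some.sum fun _ x => x :=
      Finsupp.sum_option_index e.1 (fun _ e => e) (fun _ => rfl) (fun _ _ _ => rfl)
    have he := e.2
    ext (_|a)
    · have h0 : (Finsupp.mapDomain Option.some (e.1).some) none = 0 :=
        Finsupp.mapDomain_notin_range _ _ (by simp)
      simp only [Finsupp.coe_add, Pi.add_apply, h0, Finsupp.single_eq_same, zero_add]
      omega
    · simp [Finsupp.mapDomain_apply (Option.some_injective α)]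

def equivSumLe (α : Type*) [DecidableEq α] (m : ℕ) :
    {d : α →₀ ℕ // (d.sum fun _ e => e) ≤ m} ≃ Sym (Option α) m :=
  (equivPad α m).trans (equivSymAux (Option α) m)

instance fintypeSumLe (n m : ℕ) : Fintype {d : Fin n →₀ ℕ // (d.sum fun _ e => e) ≤ m} :=
  Fintype.ofEquiv _ (equivSumLe (Fin n) m).symm

lemma card_sumLe (n m : ℕ) :
    Fintype.card {d : Fin n →₀ ℕ // (d.sum fun _ e => e) ≤ m} = (n + m).choose n := by
  rw [Fintype.card_congr (equivSumLe (Fin n) m), Sym.card_sym_eq_choose]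
  simp only [Fintype.card_option, Fintype.card_fin]
  have h2 : (n + m).choose (n + m - n) = (n + m).choose n :=
    Nat.choose_symm (Nat.le_add_right n m)
  rw [show n + 1 + m - 1 = n + m from by omega]
  rw [show n + m - n = m from by omega] at h2
  exact h2

end Count

section Final
open MvPolynomial

variable {n : ℕ}

lemma w_symm_Φ' (hn : 2 ≤ n) (x : (Fin n →₀ ℕ) × (Fin 2 × Fin 2)) :
    w ((Φ hn).symm x) = (∑ i : Fin n, x.1 i) + (((x.2.1 : ℕ)) + ((x.2.2 : ℕ))) / 2 := by
  obtain ⟨q, r⟩ := x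
  exact w_symm_Φ hn q r

lemma card_comp (n ℓ c : ℕ) (hℓ : 1 ≤ ℓ) (hc : c ≤ 1) (hn1 : 1 ≤ n) :
    Nat.card {q : Fin n →₀ ℕ // (∑ i : Fin n, q i) + c < ℓ} = (n + ℓ - 1 - c).choose n := by
  have hsum : ∀ q : Fin n →₀ ℕ, (q.sum fun _ e => e) = ∑ i : Fin n, q i :=
    fun q => Finsupp.sum_fintype _ _ (fun _ => rfl)
  rcases le_or_gt ℓ c with h | h
  · have hemp : IsEmpty {q : Fin n →₀ ℕ // (∑ i : Fin n, q i) + c < ℓ} :=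
      ⟨fun x => by have := x.2; omega⟩
    rw [Nat.card_of_isEmpty]
    have h1 : ℓ = 1 ∧ c = 1 := by omega
    obtain ⟨rfl, rfl⟩ := h1
    have : n + 1 - 1 - 1 = n - 1 := by omega
    rw [this]
    exact (Nat.choose_eq_zero_of_lt (by omega)).symm
  · have e : {q : Fin n →₀ ℕ // (∑ i : Fin n, q i) + c < ℓ}
        ≃ {q : Fin n →₀ ℕ // (q.sum fun _ e => e) ≤ ℓ - 1 - c} :=
      Equiv.subtypeEquivRight (fun q => by rw [hsum]; omega)
    rw [Nat.card_congr e, Nat.card_eq_fintype_card, card_sumLe]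
    congr 1
    omega

/-- For `n ≥ 2` and every `ℓ ≥ 1`, the quotient `R/J^ℓ` is a finite-dimensional
`ℂ`-vector space of dimension `3·C(n+ℓ−1, n) + C(n+ℓ−2, n)`. -/
theorem stmt7 (n : ℕ) (hn : 2 ≤ n) (ℓ : ℕ) (hℓ : 1 ≤ ℓ) :
    FiniteDimensional ℂ (MvPolynomial (Fin n) ℂ ⧸ Jid n ^ ℓ) ∧
      Module.finrank ℂ (MvPolynomial (Fin n) ℂ ⧸ Jid n ^ ℓ) =
        3 * (n + ℓ - 1).choose n + (n + ℓ - 2).choose n := by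
  classical
  set s : Set (Fin n →₀ ℕ) := {d | ℓ ≤ w d} with hs
  have hcompl : IsCompl (restrictSupport ℂ s) (restrictSupport ℂ sᶜ) := by
    constructor
    · rw [Submodule.disjoint_def]
      intro p h1 h2
      have : p.support = ∅ := Finset.eq_empty_of_forall_notMem fun d hd => h2 hd (h1 hd)
      exact MvPolynomial.support_eq_empty.1 this
    · rw [codisjoint_iff]
      show AddMonoidAlgebra.supported ℂ ℂ s ⊔ AddMonoidAlgebra.supported ℂ ℂ sᶜ = ⊤
      rw [AddMonoidAlgebra.supported_eq_map, AddMonoidAlgebra.supported_eq_map, ← Submodule.map_sup,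
        ← Finsupp.supported_union, Set.union_compl_self, Finsupp.supported_univ, Submodule.map_top,
        LinearEquiv.range]
  let e : (MvPolynomial (Fin n) ℂ ⧸ Jid n ^ ℓ) ≃ₗ[ℂ] restrictSupport ℂ sᶜ :=
    ((Submodule.Quotient.restrictScalarsEquiv ℂ (Jid n ^ ℓ)).symm.trans
      (Submodule.quotEquivOfEq _ _ (pow_restrict hn ℓ))).trans
      (Submodule.quotientEquivOfIsCompl _ _ hcompl)
  let P : (Fin 2 × Fin 2) → (Fin n →₀ ℕ) → Prop :=
    fun r q => (∑ i : Fin n, q i) + (((r.1 : ℕ)) + ((r.2 : ℕ))) / 2 < ℓ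
  let E1 : (sᶜ : Set (Fin n →₀ ℕ)) ≃ {d : Fin n →₀ ℕ // w d < ℓ} :=
    Equiv.subtypeEquivRight (fun d => by
      change d ∈ sᶜ ↔ w d < ℓ
      rw [Set.mem_compl_iff]
      change ¬ (ℓ ≤ w d) ↔ _
      omega)
  let E2 : {d : Fin n →₀ ℕ // w d < ℓ} ≃
      {x : (Fin n →₀ ℕ) × (Fin 2 × Fin 2) //
        (∑ i : Fin n, x.1 i) + (((x.2.1 : ℕ)) + ((x.2.2 : ℕ))) / 2 < ℓ} :=
    Equiv.subtypeEquiv (Φ hn) (fun d => by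
      change w d < ℓ ↔ _
      conv_lhs => rw [← Equiv.symm_apply_apply (Φ hn) d]
      rw [w_symm_Φ' hn ((Φ hn) d)])
  let E3 : {x : (Fin n →₀ ℕ) × (Fin 2 × Fin 2) //
        (∑ i : Fin n, x.1 i) + (((x.2.1 : ℕ)) + ((x.2.2 : ℕ))) / 2 < ℓ} ≃
      {y : (Fin 2 × Fin 2) × (Fin n →₀ ℕ) // P y.1 y.2} :=
    Equiv.subtypeEquiv (Equiv.prodComm (Fin n →₀ ℕ) (Fin 2 × Fin 2)) (fun x => Iff.rfl)
  let E : (sᶜ : Set (Fin n →₀ ℕ)) ≃ Σ r : Fin 2 × Fin 2, {q : Fin n →₀ ℕ // P r q} :=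
    E1.trans (E2.trans (E3.trans (Equiv.subtypeProdEquivSigmaSubtype P)))
  haveI hFin : ∀ r : Fin 2 × Fin 2, Fintype {q : Fin n →₀ ℕ // P r q} := by
    intro r
    refine Fintype.ofInjective
      (fun x => (⟨x.1, by
        have hx := x.2
        have hsum : (x.1.sum fun _ e => e) = ∑ i : Fin n, x.1 i :=
          Finsupp.sum_fintype _ _ (fun _ => rfl)
        simp only [P] at hx
        omega⟩ : {q : Fin n →₀ ℕ // (q.sum fun _ e => e) ≤ ℓ})) ?_
    intro a b hab
    have h2 := congrArg Subtype.val hab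
    exact Subtype.ext h2
  haveI : Fintype (sᶜ : Set (Fin n →₀ ℕ)) := Fintype.ofEquiv _ E.symm
  haveI : Module.Finite ℂ (restrictSupport ℂ (sᶜ : Set (Fin n →₀ ℕ))) :=
    Module.Finite.of_basis (basisRestrictSupport ℂ sᶜ)
  constructor
  · exact e.symm.finiteDimensional
  · have hcard : ∀ r : Fin 2 × Fin 2,
        Nat.card {q : Fin n →₀ ℕ // P r q}
          = (n + ℓ - 1 - (((r.1 : ℕ)) + ((r.2 : ℕ))) / 2).choose n := by
      intro r
      have hr1 : (r.1 : ℕ) < 2 := r.1.2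
      have hr2 : (r.2 : ℕ) < 2 := r.2.2
      exact card_comp n ℓ _ hℓ (by omega) (by omega)
    rw [e.finrank_eq, Module.finrank_eq_card_basis (basisRestrictSupport ℂ sᶜ),
      ← Nat.card_eq_fintype_card, Nat.card_congr E, Nat.card_eq_fintype_card,
      Fintype.card_sigma]
    simp only [← Nat.card_eq_fintype_card]
    rw [Fintype.sum_prod_type, Fin.sum_univ_two, Fin.sum_univ_two, Fin.sum_univ_two]
    rw [hcard (0, 0), hcard (0, 1), hcard (1, 0), hcard (1, 1)]
    norm_num
    rw [show n + ℓ - 1 - 1 = n + ℓ - 2 from by omega]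
    omega

end Final
end
end

section
/- Let n ≥ 2 be an integer, R = ℂ[x₁,…,xₙ] the polynomial ring, and J ⊂ R the ideal J = (x₃,…,xₙ) + (x₁,x₂)², i.e. the ideal generated by x₁², x₁x₂, x₂², x₃, …, xₙ. Then for every integer i ≥ 0, the quotient J^i/J^{i+1} is a finite-dimensional ℂ-vector space of dimension 3·C(n+i−1, n−1) + C(n+i−2, n−1), where C(a,b) denotes the binomial coefficient (with C(a,b) = 0 when a < b). -/
open MvPolynomial

/-- The `ℂ`-vector space `J^i/J^{i+1}`, realized as the quotient of the `ℂ`-submodule `J^i`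
of `R` by the `ℂ`-submodule `J^{i+1}` (pulled back along the inclusion `J^i ⊆ R`). -/
noncomputable abbrev JGraded (n i : ℕ) :=
  (Submodule.restrictScalars ℂ (Jid n ^ i : Ideal (MvPolynomial (Fin n) ℂ))) ⧸
    Submodule.comap
      (Submodule.restrictScalars ℂ (Jid n ^ i : Ideal (MvPolynomial (Fin n) ℂ))).subtype
      (Submodule.restrictScalars ℂ (Jid n ^ (i + 1) : Ideal (MvPolynomial (Fin n) ℂ)))

/-- weighted degree: x₁,x₂ weight 1, others weight 2 -/
def wt (n : ℕ) (d : Fin n →₀ ℕ) : ℕ := d.sum fun k m => if (k : ℕ) < 2 then m else 2 * m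

lemma wt_add (n : ℕ) (d e : Fin n →₀ ℕ) : wt n (d + e) = wt n d + wt n e :=
  Finsupp.sum_add_index' (fun a => by simp) (fun a b₁ b₂ => by split <;> ring)

lemma wt_single (n : ℕ) (k : Fin n) (m : ℕ) :
    wt n (Finsupp.single k m) = if (k : ℕ) < 2 then m else 2 * m :=
  Finsupp.sum_single_index (by split <;> rfl)

lemma wt_coeff_mul {n a b : ℕ} {p q : MvPolynomial (Fin n) ℂ}
    (hp : ∀ d, wt n d < a → coeff d p = 0) (hq : ∀ d, wt n d < b → coeff d q = 0) :
    ∀ d, wt n d < a + b → coeff d (p * q) = 0 := by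
  intro d hd
  rw [coeff_mul]
  apply Finset.sum_eq_zero
  rintro ⟨u, v⟩ huv
  rw [Finset.HasAntidiagonal.mem_antidiagonal] at huv
  have hw : wt n u + wt n v = wt n d := by rw [← wt_add, huv]
  rcases lt_or_ge (wt n u) a with h | h
  · rw [hp u h, zero_mul]
  · rw [hq v (by omega), mul_zero]

/-- The ideal of polynomials all of whose monomials have weight at least `m`. -/
noncomputable def Mw (n m : ℕ) : Ideal (MvPolynomial (Fin n) ℂ) where
  carrier := {p | ∀ d, wt n d < m → coeff d p = 0}
  add_mem' := fun ha hb d hd => by rw [coeff_add, ha d hd, hb d hd, add_zero]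
  zero_mem' := fun d _ => by simp
  smul_mem' := by
    intro c p hp d hd
    rw [smul_eq_mul]
    exact wt_coeff_mul (a := 0) (fun d h => absurd h (by omega)) hp d (by omega)

lemma mem_Mw {n m : ℕ} {p : MvPolynomial (Fin n) ℂ} :
    p ∈ Mw n m ↔ ∀ d, wt n d < m → coeff d p = 0 := Iff.rfl

lemma X_mem_Mw {n : ℕ} (k : Fin n) (m : ℕ) (h : m ≤ if (k : ℕ) < 2 then 1 else 2) :
    (X k : MvPolynomial (Fin n) ℂ) ∈ Mw n m := by
  intro d hd
  rw [coeff_X']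
  split
  · next heq => exfalso; rw [← heq, wt_single] at hd; split at hd <;> split at h <;> omega
  · rfl

lemma mul_mem_Mw {n a b : ℕ} {p q : MvPolynomial (Fin n) ℂ} (hp : p ∈ Mw n a) (hq : q ∈ Mw n b) :
    p * q ∈ Mw n (a + b) := wt_coeff_mul hp hq

lemma Mw_mul_le (n a b : ℕ) : Mw n a * Mw n b ≤ Mw n (a + b) :=
  Ideal.mul_le.2 fun r hr s hs => mul_mem_Mw hr hs

lemma Jid_le_Mw (n : ℕ) : Jid n ≤ Mw n 2 := by
  rw [Jid, sup_le_iff]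
  constructor
  · rw [Ideal.span_le]
    rintro p ⟨k, hk, rfl⟩
    exact X_mem_Mw k 2 (by simp [Nat.not_lt.2 hk])
  · rw [pow_two]
    refine le_trans (Ideal.mul_mono ?_ ?_) (Mw_mul_le n 1 1) <;>
    · rw [Ideal.span_le]
      rintro p ⟨k, hk, rfl⟩
      exact X_mem_Mw k 1 (by simp [hk])

lemma Jid_pow_le (n i : ℕ) : Jid n ^ i ≤ Mw n (2 * i) := by
  induction i with
  | zero => intro p _ d hd; omega
  | succ i ih =>
      rw [pow_succ]
      refine le_trans (Ideal.mul_mono ih (Jid_le_Mw n)) ?_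
      refine le_trans (Mw_mul_le n (2 * i) 2) ?_
      exact le_of_eq (by ring_nf)

lemma wt_eq_sum (n : ℕ) (d : Fin n →₀ ℕ) :
    wt n d = ∑ k : Fin n, if (k : ℕ) < 2 then d k else 2 * d k := by
  rw [wt, Finsupp.sum_fintype]
  intro a; split <;> rfl

section
variable {n : ℕ} (hn : 2 ≤ n)

def z0 : Fin n := ⟨0, by omega⟩
def z1 : Fin n := ⟨1, by omega⟩

lemma z0_ne_z1 : z0 hn ≠ z1 hn := by simp [z0, z1, Fin.ext_iff]

/-- the index set of the "heavy" variables -/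
def Eset : Finset (Fin n) := (Finset.univ.erase (z0 hn)).erase (z1 hn)

lemma mem_Eset {k : Fin n} : k ∈ Eset hn ↔ 2 ≤ (k : ℕ) := by
  simp only [Eset, Finset.mem_erase, Finset.mem_univ, and_true, z0, z1, ne_eq,
    Fin.ext_iff]
  omega

lemma sum_split (g : Fin n → ℕ) :
    ∑ k, g k = g (z0 hn) + g (z1 hn) + ∑ k ∈ Eset hn, g k := by
  rw [← Finset.add_sum_erase _ g (Finset.mem_univ (z0 hn)),
    ← Finset.add_sum_erase _ g (Finset.mem_erase.2 ⟨(z0_ne_z1 hn).symm, Finset.mem_univ _⟩)]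
  ring_nf
  rfl

lemma wt_eq (d : Fin n →₀ ℕ) :
    wt n d = d (z0 hn) + d (z1 hn) + 2 * ∑ k ∈ Eset hn, d k := by
  rw [wt_eq_sum, sum_split hn]
  have h0 : ((z0 hn : ℕ)) < 2 := by simp [z0]
  have h1 : ((z1 hn : ℕ)) < 2 := by simp [z1]
  rw [if_pos h0, if_pos h1, Finset.mul_sum]
  congr 1
  exact Finset.sum_congr rfl fun k hk => by rw [if_neg (by have := (mem_Eset hn).1 hk; omega)]

end

section
variable {n : ℕ} (hn : 2 ≤ n)
lemma X_mem_Jid {k : Fin n} (hk : 2 ≤ (k : ℕ)) : (X k : MvPolynomial (Fin n) ℂ) ∈ Jid n :=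
  Ideal.mem_sup_left (Ideal.subset_span ⟨k, hk, rfl⟩)

lemma XX_mem_Jid {j k : Fin n} (hj : (j : ℕ) < 2) (hk : (k : ℕ) < 2) :
    (X j * X k : MvPolynomial (Fin n) ℂ) ∈ Jid n := by
  refine Ideal.mem_sup_right ?_
  rw [pow_two]
  exact Ideal.mul_mem_mul (Ideal.subset_span ⟨j, hj, rfl⟩) (Ideal.subset_span ⟨k, hk, rfl⟩)

include hn

lemma decompose {d : Fin n →₀ ℕ} (hd : 2 ≤ wt n d) :
    ∃ e g : Fin n →₀ ℕ, d = e + g ∧ wt n g = 2 ∧ (monomial g (1:ℂ) : MvPolynomial (Fin n) ℂ) ∈ Jid n := by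
  by_cases hex : ∃ k : Fin n, 2 ≤ (k : ℕ) ∧ d k ≠ 0
  · obtain ⟨k, hk2, hk0⟩ := hex
    refine ⟨d - Finsupp.single k 1, Finsupp.single k 1, ?_, ?_, ?_⟩
    · rw [tsub_add_cancel_of_le (Finsupp.single_le_iff.2 (by omega))]
    · rw [wt_single, if_neg (by omega)]
    · exact X_mem_Jid hk2
  · push_neg at hex
    have hE : ∀ k ∈ Eset hn, d k = 0 := fun k hk => hex k ((mem_Eset hn).1 hk)
    have hw : wt n d = d (z0 hn) + d (z1 hn) := by
      rw [wt_eq hn, Finset.sum_eq_zero hE]; omega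
    rcases le_or_gt 2 (d (z0 hn)) with h0 | h0
    · refine ⟨d - Finsupp.single (z0 hn) 2, Finsupp.single (z0 hn) 2, ?_, ?_, ?_⟩
      · rw [tsub_add_cancel_of_le (Finsupp.single_le_iff.2 h0)]
      · rw [wt_single, if_pos (by simp [z0])]
      · rw [← X_pow_eq_monomial, pow_two]
        exact XX_mem_Jid (by simp [z0]) (by simp [z0])
    rcases le_or_gt 2 (d (z1 hn)) with h1 | h1
    · refine ⟨d - Finsupp.single (z1 hn) 2, Finsupp.single (z1 hn) 2, ?_, ?_, ?_⟩
      · rw [tsub_add_cancel_of_le (Finsupp.single_le_iff.2 h1)]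
      · rw [wt_single, if_pos (by simp [z1])]
      · rw [← X_pow_eq_monomial, pow_two]
        exact XX_mem_Jid (by simp [z1]) (by simp [z1])
    · have h0' : d (z0 hn) = 1 := by omega
      have h1' : d (z1 hn) = 1 := by omega
      set g : Fin n →₀ ℕ := Finsupp.single (z0 hn) 1 + Finsupp.single (z1 hn) 1 with hg
      have hgle : g ≤ d := by
        intro k
        rw [hg, Finsupp.add_apply]
        by_cases hk0 : k = z0 hn
        · subst hk0
          rw [Finsupp.single_eq_same, Finsupp.single_eq_of_ne (z0_ne_z1 hn)]
          omega
        by_cases hk1 : k = z1 hn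
        · subst hk1
          rw [Finsupp.single_eq_same, Finsupp.single_eq_of_ne (z0_ne_z1 hn).symm]
          omega
        · rw [Finsupp.single_eq_of_ne hk0, Finsupp.single_eq_of_ne hk1]
          omega
      refine ⟨d - g, g, ?_, ?_, ?_⟩
      · rw [tsub_add_cancel_of_le hgle]
      · rw [hg, wt_add, wt_single, wt_single, if_pos (by simp [z0]), if_pos (by simp [z1])]
      · have : (monomial g (1:ℂ) : MvPolynomial (Fin n) ℂ) = X (z0 hn) * X (z1 hn) := by
          rw [hg,
            show (X (z0 hn) : MvPolynomial (Fin n) ℂ) = monomial (Finsupp.single (z0 hn) 1) 1 from rfl,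
            show (X (z1 hn) : MvPolynomial (Fin n) ℂ) = monomial (Finsupp.single (z1 hn) 1) 1 from rfl,
            monomial_mul, one_mul]
        rw [this]
        exact XX_mem_Jid (by simp [z0]) (by simp [z1])

lemma monomial_mem_pow (i : ℕ) : ∀ d : Fin n →₀ ℕ, 2 * i ≤ wt n d →
    (monomial d (1:ℂ) : MvPolynomial (Fin n) ℂ) ∈ Jid n ^ i := by
  induction i with
  | zero => intro d _; simp
  | succ i ih =>
      intro d hd
      obtain ⟨e, g, rfl, hg2, hgJ⟩ := decompose hn (d := d) (by omega)
      have he : 2 * i ≤ wt n e := by have := wt_add n e g; omega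
      have : (monomial (e + g) (1:ℂ) : MvPolynomial (Fin n) ℂ)
          = monomial e 1 * monomial g 1 := by
        rw [monomial_mul, one_mul]
      rw [this, pow_succ]
      exact Ideal.mul_mem_mul (ih e he) hgJ

lemma Mw_le_Jid_pow (i : ℕ) : Mw n (2 * i) ≤ Jid n ^ i := by
  intro p hp
  rw [← support_sum_monomial_coeff p]
  refine Submodule.sum_mem _ fun d hd => ?_
  have hwd : 2 * i ≤ wt n d := by
    by_contra h
    exact (mem_support_iff.1 hd) (hp d (by omega))
  have : (monomial d (coeff d p) : MvPolynomial (Fin n) ℂ) = coeff d p • monomial d 1 := by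
    rw [smul_monomial, smul_eq_mul, mul_one]
  rw [this, smul_eq_C_mul]
  exact Ideal.mul_mem_left _ _ (monomial_mem_pow hn i d hwd)

lemma Jid_pow_eq (i : ℕ) : Jid n ^ i = Mw n (2 * i) :=
  le_antisymm (Jid_pow_le n i) (Mw_le_Jid_pow hn i)

end

section Count
variable {n : ℕ} (hn : 2 ≤ n)

def Wf (n : ℕ) (f : Fin n → ℕ) : ℕ := ∑ k : Fin n, if (k : ℕ) < 2 then f k else 2 * f k

/-- sum over the heavy variables -/
def ES (hn : 2 ≤ n) (f : Fin n → ℕ) : ℕ := ∑ k ∈ Eset hn, f k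

lemma Wf_split (f : Fin n → ℕ) : Wf n f = f (z0 hn) + f (z1 hn) + 2 * ES hn f := by
  rw [Wf, sum_split hn, ES, Finset.mul_sum]
  have h0 : ((z0 hn : ℕ)) < 2 := by simp [z0]
  have h1 : ((z1 hn : ℕ)) < 2 := by simp [z1]
  rw [if_pos h0, if_pos h1]
  congr 1
  exact Finset.sum_congr rfl fun k hk => by rw [if_neg (by have := (mem_Eset hn).1 hk; omega)]

lemma sum_split' (f : Fin n → ℕ) : ∑ k, f k = f (z0 hn) + f (z1 hn) + ES hn f := sum_split hn f

/-- update a function at positions 0 and 1 -/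
def upd (hn : 2 ≤ n) (f : Fin n → ℕ) (u v : ℕ) : Fin n → ℕ :=
  fun k => if k = z0 hn then u else if k = z1 hn then v else f k

@[simp] lemma upd_z0 (f : Fin n → ℕ) (u v : ℕ) : upd hn f u v (z0 hn) = u := by
  simp [upd]

@[simp] lemma upd_z1 (f : Fin n → ℕ) (u v : ℕ) : upd hn f u v (z1 hn) = v := by
  rw [upd, if_neg (z0_ne_z1 hn).symm, if_pos rfl]

lemma upd_ne (f : Fin n → ℕ) (u v : ℕ) {k : Fin n} (h0 : k ≠ z0 hn) (h1 : k ≠ z1 hn) :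
    upd hn f u v k = f k := by
  rw [upd, if_neg h0, if_neg h1]

lemma mem_Eset_ne {k : Fin n} (hk : k ∈ Eset hn) : k ≠ z0 hn ∧ k ≠ z1 hn := by
  have := (mem_Eset hn).1 hk
  constructor <;> rintro rfl <;> simp [z0, z1] at this

lemma ES_upd (f : Fin n → ℕ) (u v : ℕ) : ES hn (upd hn f u v) = ES hn f :=
  Finset.sum_congr rfl fun k hk =>
    upd_ne hn f u v (mem_Eset_ne hn hk).1 (mem_Eset_ne hn hk).2

lemma upd_upd (f : Fin n → ℕ) (u v u' v' : ℕ) :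
    upd hn (upd hn f u v) u' v' = upd hn f u' v' := by
  funext k; simp only [upd]; split_ifs <;> rfl

lemma upd_eq_self (f : Fin n → ℕ) {u v : ℕ} (hu : u = f (z0 hn)) (hv : v = f (z1 hn)) :
    upd hn f u v = f := by
  funext k; simp only [upd]
  split_ifs with h1 h2
  · rw [hu, h1]
  · rw [hv, h2]
  · rfl

variable (i : ℕ)

def bigToFun : {f : Fin n → ℕ // Wf n f = 2*i ∨ Wf n f = 2*i+1} →
    ({e : Fin n → ℕ // ∑ k, e k = i} × Fin 3) ⊕ {e : Fin n → ℕ // (∑ k, e k) + 1 = i} :=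
  fun x =>
    if h : x.1 (z0 hn) % 2 = 1 ∧ x.1 (z1 hn) % 2 = 1 then
      .inr ⟨upd hn x.1 (x.1 (z0 hn) / 2) (x.1 (z1 hn) / 2), by
        have h1 := x.2
        rw [Wf_split hn] at h1
        rw [sum_split' hn, upd_z0, upd_z1, ES_upd]
        omega⟩
    else
      .inl (⟨upd hn x.1 (x.1 (z0 hn) / 2) (x.1 (z1 hn) / 2), by
        have h1 := x.2
        rw [Wf_split hn] at h1
        rw [sum_split' hn, upd_z0, upd_z1, ES_upd]
        omega⟩,
        ⟨2 * (x.1 (z0 hn) % 2) + x.1 (z1 hn) % 2, by omega⟩)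

def bigInvFun :
    (({e : Fin n → ℕ // ∑ k, e k = i} × Fin 3) ⊕ {e : Fin n → ℕ // (∑ k, e k) + 1 = i}) →
    {f : Fin n → ℕ // Wf n f = 2*i ∨ Wf n f = 2*i+1} :=
  Sum.elim
    (fun y => ⟨upd hn y.1.1 (2 * y.1.1 (z0 hn) + (y.2 : ℕ) / 2)
        (2 * y.1.1 (z1 hn) + (y.2 : ℕ) % 2), by
      have h1 := y.1.2
      have h2 := y.2.isLt
      rw [sum_split' hn] at h1
      rw [Wf_split hn, upd_z0, upd_z1, ES_upd]
      omega⟩)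
    (fun y => ⟨upd hn y.1 (2 * y.1 (z0 hn) + 1) (2 * y.1 (z1 hn) + 1), by
      have h1 := y.2
      rw [sum_split' hn] at h1
      rw [Wf_split hn, upd_z0, upd_z1, ES_upd]
      omega⟩)

def bigEquiv : {f : Fin n → ℕ // Wf n f = 2*i ∨ Wf n f = 2*i+1} ≃
    (({e : Fin n → ℕ // ∑ k, e k = i} × Fin 3) ⊕ {e : Fin n → ℕ // (∑ k, e k) + 1 = i}) where
  toFun := bigToFun hn i
  invFun := bigInvFun hn i
  left_inv := by
    rintro ⟨f, hf⟩
    by_cases h : f (z0 hn) % 2 = 1 ∧ f (z1 hn) % 2 = 1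
    · simp only [bigToFun, dif_pos h, bigInvFun, Sum.elim_inr]
      apply Subtype.ext
      simp only [upd_z0, upd_z1, upd_upd]
      exact upd_eq_self hn f (by omega) (by omega)
    · simp only [bigToFun, dif_neg h, bigInvFun, Sum.elim_inl]
      apply Subtype.ext
      simp only [upd_z0, upd_z1, upd_upd]
      exact upd_eq_self hn f (by omega) (by omega)
  right_inv := by
    rintro (⟨⟨e, he⟩, j⟩ | ⟨e, he⟩)
    · have hj := j.isLt
      have hcond : ¬((upd hn e (2 * e (z0 hn) + (j : ℕ) / 2) (2 * e (z1 hn) + (j : ℕ) % 2)) (z0 hn) % 2 = 1 ∧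
          (upd hn e (2 * e (z0 hn) + (j : ℕ) / 2) (2 * e (z1 hn) + (j : ℕ) % 2)) (z1 hn) % 2 = 1) := by
        rw [upd_z0, upd_z1]; omega
      dsimp only [bigInvFun, Sum.elim_inl, bigToFun]
      rw [dif_neg hcond]
      refine congrArg Sum.inl (Prod.ext ?_ ?_)
      · apply Subtype.ext
        simp only [upd_z0, upd_z1, upd_upd]
        exact upd_eq_self hn e (by omega) (by omega)
      · apply Fin.ext
        simp only [upd_z0, upd_z1]
        omega
    · have hcond : ((upd hn e (2 * e (z0 hn) + 1) (2 * e (z1 hn) + 1)) (z0 hn) % 2 = 1 ∧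
          (upd hn e (2 * e (z0 hn) + 1) (2 * e (z1 hn) + 1)) (z1 hn) % 2 = 1) := by
        rw [upd_z0, upd_z1]; omega
      dsimp only [bigInvFun, Sum.elim_inr, bigToFun]
      rw [dif_pos hcond]
      refine congrArg Sum.inr (Subtype.ext ?_)
      simp only [upd_z0, upd_z1, upd_upd]
      exact upd_eq_self hn e (by omega) (by omega)

lemma symEquivAux (j : ℕ) (hn1 : 1 ≤ n) : Nat.card {e : Fin n → ℕ // ∑ k, e k = j} = (n + j - 1).choose (n - 1) := by
  rw [Nat.card_congr (Sym.equivNatSumOfFintype (Fin n) j).symm, Nat.card_eq_fintype_card,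
    Sym.card_sym_eq_choose, Fintype.card_fin]
  rw [← Nat.choose_symm (show j ≤ n + j - 1 by omega)]
  congr 1
  omega

lemma finite_D (j : ℕ) : Finite {e : Fin n → ℕ // ∑ k, e k = j} :=
  Finite.of_equiv _ (Sym.equivNatSumOfFintype (Fin n) j)

noncomputable def TEquiv : {d : Fin n →₀ ℕ // wt n d = 2*i ∨ wt n d = 2*i+1} ≃
    {f : Fin n → ℕ // Wf n f = 2*i ∨ Wf n f = 2*i+1} :=
  Equiv.subtypeEquiv Finsupp.equivFunOnFinite (fun d => by
    have : Wf n (Finsupp.equivFunOnFinite d) = wt n d := by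
      rw [wt_eq_sum]; rfl
    rw [this])

include hn in
lemma B_facts (j : ℕ) :
    Finite {e : Fin n → ℕ // (∑ k, e k) + 1 = j} ∧
      Nat.card {e : Fin n → ℕ // (∑ k, e k) + 1 = j} = (n + j - 2).choose (n - 1) := by
  cases j with
  | zero =>
      haveI he : IsEmpty {e : Fin n → ℕ // (∑ k, e k) + 1 = 0} :=
        ⟨fun e => by have := e.2; omega⟩
      refine ⟨inferInstance, ?_⟩
      rw [Nat.card_of_isEmpty]
      symm
      exact Nat.choose_eq_zero_of_lt (by omega)
  | succ j =>
      have e : {e : Fin n → ℕ // (∑ k, e k) + 1 = j + 1} ≃ {e : Fin n → ℕ // ∑ k, e k = j} :=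
        Equiv.subtypeEquivRight (fun e => by omega)
      have fj := finite_D (n := n) j
      refine ⟨Finite.of_equiv _ e.symm, ?_⟩
      rw [Nat.card_congr e, symEquivAux j (by omega)]
      congr 1 <;> omega

include hn in
lemma finite_T : Finite {d : Fin n →₀ ℕ // wt n d = 2*i ∨ wt n d = 2*i+1} := by
  have fA := finite_D (n := n) i
  have fB := (B_facts hn i).1
  exact Finite.of_equiv _ ((TEquiv (n := n) i).trans (bigEquiv hn i)).symm

include hn in
lemma card_T : Nat.card {d : Fin n →₀ ℕ // wt n d = 2*i ∨ wt n d = 2*i+1} =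
    3 * (n + i - 1).choose (n - 1) + (n + i - 2).choose (n - 1) := by
  have fA := finite_D (n := n) i
  have fB := (B_facts hn i).1
  rw [Nat.card_congr ((TEquiv (n := n) i).trans (bigEquiv hn i)), Nat.card_sum, Nat.card_prod,
    (B_facts hn i).2, symEquivAux i (by omega),
    show Nat.card (Fin 3) = 3 by rw [Nat.card_eq_fintype_card, Fintype.card_fin]]
  ring

end Count

section Main
variable {n : ℕ} (hn : 2 ≤ n) (i : ℕ)

include hn in
theorem main_thm :
    FiniteDimensional ℂ (JGraded n i) ∧
      Module.finrank ℂ (JGraded n i) =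
        3 * (n + i - 1).choose (n - 1) + (n + i - 2).choose (n - 1) := by
  classical
  haveI : Finite {d : Fin n →₀ ℕ // wt n d = 2*i ∨ wt n d = 2*i+1} := finite_T hn i
  haveI : Fintype {d : Fin n →₀ ℕ // wt n d = 2*i ∨ wt n d = 2*i+1} := Fintype.ofFinite _
  set M := Submodule.restrictScalars ℂ (Jid n ^ i : Ideal (MvPolynomial (Fin n) ℂ)) with hM
  set N := Submodule.comap M.subtype
      (Submodule.restrictScalars ℂ (Jid n ^ (i + 1) : Ideal (MvPolynomial (Fin n) ℂ))) with hN
  let Φ : M →ₗ[ℂ] ({d : Fin n →₀ ℕ // wt n d = 2*i ∨ wt n d = 2*i+1} → ℂ) :=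
    { toFun := fun p t => coeff t.1 p.1
      map_add' := fun p q => by funext t; exact coeff_add t.1 p.1 q.1
      map_smul' := fun c p => by funext t; exact coeff_smul t.1 c p.1 }
  have hmemM : ∀ p : M, ∀ d, wt n d < 2 * i → coeff d p.1 = 0 := fun p => by
    have h2 : p.1 ∈ Mw n (2 * i) := by rw [← Jid_pow_eq hn i]; exact p.2
    exact h2
  have hker : LinearMap.ker Φ = N := by
    ext p
    simp only [LinearMap.mem_ker, hN, Submodule.mem_comap, Submodule.subtype_apply,
      Submodule.restrictScalars_mem]
    rw [Jid_pow_eq hn (i + 1)]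
    constructor
    · intro h d hd
      rcases lt_or_ge (wt n d) (2 * i) with h' | h'
      · exact hmemM p d h'
      · have ht : wt n d = 2*i ∨ wt n d = 2*i+1 := by omega
        exact congrFun h ⟨d, ht⟩
    · intro h
      funext t
      exact h t.1 (by rcases t.2 with h' | h' <;> omega)
  have hsurj : Function.Surjective Φ := by
    intro g
    set q : MvPolynomial (Fin n) ℂ :=
      ∑ t : {d : Fin n →₀ ℕ // wt n d = 2*i ∨ wt n d = 2*i+1}, monomial t.1 (g t) with hq
    have hqM : q ∈ Mw n (2 * i) := by
      intro d hd
      rw [hq, coeff_sum]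
      refine Finset.sum_eq_zero fun t _ => ?_
      rw [coeff_monomial, if_neg]
      rintro rfl
      rcases t.2 with h' | h' <;> omega
    refine ⟨⟨q, by rw [hM, Jid_pow_eq hn i]; exact hqM⟩, ?_⟩
    funext t
    show coeff t.1 q = g t
    rw [hq, coeff_sum]
    rw [Finset.sum_eq_single t]
    · rw [coeff_monomial, if_pos rfl]
    · intro s _ hst
      rw [coeff_monomial, if_neg (fun h => hst (Subtype.ext h))]
    · intro h
      exact absurd (Finset.mem_univ t) h
  let E : JGraded n i ≃ₗ[ℂ] ({d : Fin n →₀ ℕ // wt n d = 2*i ∨ wt n d = 2*i+1} → ℂ) :=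
    (Submodule.quotEquivOfEq N (LinearMap.ker Φ) hker.symm).trans
      (Φ.quotKerEquivOfSurjective hsurj)
  constructor
  · exact Module.Finite.equiv E.symm
  · rw [LinearEquiv.finrank_eq E, Module.finrank_pi, ← Nat.card_eq_fintype_card, card_T hn i]

end Main

/-- For `n ≥ 2` and every `i ≥ 0`, `J^i/J^{i+1}` is a finite-dimensional `ℂ`-vector space
of dimension `3·C(n+i−1, n−1) + C(n+i−2, n−1)` (with `C(a,b) = 0` when `a < b`). -/
theorem stmt8 (n : ℕ) (hn : 2 ≤ n) (i : ℕ) :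
    FiniteDimensional ℂ (JGraded n i) ∧
      Module.finrank ℂ (JGraded n i) =
        3 * (n + i - 1).choose (n - 1) + (n + i - 2).choose (n - 1) :=
  main_thm hn i
end

section
/- Let n ≥ 3 and consider the polynomial ring ℂ[x₁,…,xₙ,u₁,…,uₙ] and the ideal generated by: x₁u₁−x₂, x₁u₂−x₂u₁, and, for all 3 ≤ i, j ≤ n, the elements x₁²uᵢ−xᵢ, x₁x₂uᵢ−xᵢu₁, x₂²uᵢ−xᵢu₂ and xᵢuⱼ−xⱼuᵢ. Then the quotient ring is isomorphic as a ℂ-algebra to the polynomial ring in the n−2 variables u₃,…,uₙ over the ring ℂ[x₁,x₂,u₁,u₂]/(x₁u₁−x₂, x₁u₂−x₂u₁). -/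
open MvPolynomial

noncomputable section

namespace Stmt10Aux

/-- The ideal `(x₁u₁ - x₂, x₁u₂ - x₂u₁)` in `ℂ[x₁,x₂,u₁,u₂]`. -/
abbrev J : Ideal (MvPolynomial (Fin 4) ℂ) :=
  Ideal.span {(X 0 * X 2 - X 1 : MvPolynomial (Fin 4) ℂ), X 0 * X 3 - X 1 * X 2}

abbrev A : Type := MvPolynomial (Fin 4) ℂ ⧸ J

abbrev T (n : ℕ) : Type := MvPolynomial (Fin (n - 2)) A

/-- Images of the four core variables in `T n`. -/
def y (n : ℕ) (k : Fin 4) : T n := C (Ideal.Quotient.mk J (X k))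

variable (n : ℕ)

/-- Variable assignment defining the forward map. -/
def f0 (s : Fin n ⊕ Fin n) : T n :=
  match s with
  | Sum.inl i =>
      if h : 2 ≤ (i : ℕ) then
        y n 0 ^ 2 * X (⟨(i : ℕ) - 2, by have := i.isLt; omega⟩ : Fin (n - 2))
      else if (i : ℕ) = 0 then y n 0 else y n 1
  | Sum.inr i =>
      if h : 2 ≤ (i : ℕ) then
        X (⟨(i : ℕ) - 2, by have := i.isLt; omega⟩ : Fin (n - 2))
      else if (i : ℕ) = 0 then y n 2 else y n 3

lemma f0_inl0 (i : Fin n) (h : (i : ℕ) = 0) : f0 n (Sum.inl i) = y n 0 := by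
  simp [f0, h]

lemma f0_inl1 (i : Fin n) (h : (i : ℕ) = 1) : f0 n (Sum.inl i) = y n 1 := by
  simp [f0, h]

lemma f0_inl2 (i : Fin n) (h : 2 ≤ (i : ℕ)) :
    f0 n (Sum.inl i) =
      y n 0 ^ 2 * X (⟨(i : ℕ) - 2, by have := i.isLt; omega⟩ : Fin (n - 2)) := by
  simp [f0, h]

lemma f0_inr0 (i : Fin n) (h : (i : ℕ) = 0) : f0 n (Sum.inr i) = y n 2 := by
  simp [f0, h]

lemma f0_inr1 (i : Fin n) (h : (i : ℕ) = 1) : f0 n (Sum.inr i) = y n 3 := by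
  simp [f0, h]

lemma f0_inr2 (i : Fin n) (h : 2 ≤ (i : ℕ)) :
    f0 n (Sum.inr i) = X (⟨(i : ℕ) - 2, by have := i.isLt; omega⟩ : Fin (n - 2)) := by
  simp [f0, h]

def φ : MvPolynomial (Fin n ⊕ Fin n) ℂ →ₐ[ℂ] T n := aeval (f0 n)

variable (hn : 3 ≤ n)

def Iset : Set (MvPolynomial (Fin n ⊕ Fin n) ℂ) :=
  ({X (Sum.inl ⟨0, by linarith⟩) * X (Sum.inr ⟨0, by linarith⟩) - X (Sum.inl ⟨1, by linarith⟩),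
      X (Sum.inl ⟨0, by linarith⟩) * X (Sum.inr ⟨1, by linarith⟩) -
        X (Sum.inl ⟨1, by linarith⟩) * X (Sum.inr ⟨0, by linarith⟩)} ∪
    {p | ∃ i : Fin n, 2 ≤ (i : ℕ) ∧
       p = X (Sum.inl ⟨0, by linarith⟩) ^ 2 * X (Sum.inr i) - X (Sum.inl i)} ∪
    {p | ∃ i : Fin n, 2 ≤ (i : ℕ) ∧
       p = X (Sum.inl ⟨0, by linarith⟩) * X (Sum.inl ⟨1, by linarith⟩) * X (Sum.inr i) -
         X (Sum.inl i) * X (Sum.inr ⟨0, by linarith⟩)} ∪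
    {p | ∃ i : Fin n, 2 ≤ (i : ℕ) ∧
       p = X (Sum.inl ⟨1, by linarith⟩) ^ 2 * X (Sum.inr i) -
         X (Sum.inl i) * X (Sum.inr ⟨1, by linarith⟩)} ∪
    {p | ∃ i j : Fin n, 2 ≤ (i : ℕ) ∧ 2 ≤ (j : ℕ) ∧
       p = X (Sum.inl i) * X (Sum.inr j) - X (Sum.inl j) * X (Sum.inr i)})

def I : Ideal (MvPolynomial (Fin n ⊕ Fin n) ℂ) := Ideal.span (Iset n hn)

abbrev R : Type := MvPolynomial (Fin n ⊕ Fin n) ℂ ⧸ I n hn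


lemma memJ1 : (X 0 * X 2 - X 1 : MvPolynomial (Fin 4) ℂ) ∈ J :=
  Ideal.subset_span (by simp)

lemma memJ2 : (X 0 * X 3 - X 1 * X 2 : MvPolynomial (Fin 4) ℂ) ∈ J :=
  Ideal.subset_span (by simp)

lemma memJ3 : (X 0 * X 1 - X 0 ^ 2 * X 2 : MvPolynomial (Fin 4) ℂ) ∈ J := by
  have h : (X 0 * X 1 - X 0 ^ 2 * X 2 : MvPolynomial (Fin 4) ℂ) =
      (-X 0) * (X 0 * X 2 - X 1) := by ring
  rw [h]
  exact Ideal.mul_mem_left _ _ memJ1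

lemma memJ4 : (X 1 ^ 2 - X 0 ^ 2 * X 3 : MvPolynomial (Fin 4) ℂ) ∈ J := by
  have h : (X 1 ^ 2 - X 0 ^ 2 * X 3 : MvPolynomial (Fin 4) ℂ) =
      (-X 1) * (X 0 * X 2 - X 1) + (-X 0) * (X 0 * X 3 - X 1 * X 2) := by ring
  rw [h]
  exact Ideal.add_mem _ (Ideal.mul_mem_left _ _ memJ1) (Ideal.mul_mem_left _ _ memJ2)

lemma mkJ_eq_zero {p : MvPolynomial (Fin 4) ℂ} (hp : p ∈ J) :
    Ideal.Quotient.mk J p = 0 :=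
  Ideal.Quotient.eq_zero_iff_mem.mpr hp

lemma vanish : ∀ p ∈ Iset n hn, φ n p = 0 := by
  intro p hp
  simp only [Iset, Set.mem_union, Set.mem_insert_iff, Set.mem_singleton_iff,
    Set.mem_setOf_eq] at hp
  rcases hp with ((((h | h) | ⟨i, hi, h⟩) | ⟨i, hi, h⟩) | ⟨i, hi, h⟩) | ⟨i, j, hi, hj, h⟩ <;>
    subst h <;>
    simp only [φ, map_sub, map_mul, map_pow, aeval_X]
  · rw [f0_inl0 n ⟨0, by linarith⟩ rfl, f0_inr0 n ⟨0, by linarith⟩ rfl, f0_inl1 n ⟨1, by linarith⟩ rfl]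
    have : y n 0 * y n 2 - y n 1 = C (Ideal.Quotient.mk J (X 0 * X 2 - X 1)) := by
      simp [y, map_sub, map_mul]
    rw [this, mkJ_eq_zero memJ1, map_zero]
  · rw [f0_inl0 n ⟨0, by linarith⟩ rfl, f0_inr1 n ⟨1, by linarith⟩ rfl,
      f0_inl1 n ⟨1, by linarith⟩ rfl, f0_inr0 n ⟨0, by linarith⟩ rfl]
    have : y n 0 * y n 3 - y n 1 * y n 2 =
        C (Ideal.Quotient.mk J (X 0 * X 3 - X 1 * X 2)) := by
      simp [y, map_sub, map_mul]
    rw [this, mkJ_eq_zero memJ2, map_zero]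
  · rw [f0_inl0 n ⟨0, by linarith⟩ rfl, f0_inr2 n i hi, f0_inl2 n i hi]
    ring
  · rw [f0_inl0 n ⟨0, by linarith⟩ rfl, f0_inl1 n ⟨1, by linarith⟩ rfl,
      f0_inr2 n i hi, f0_inl2 n i hi, f0_inr0 n ⟨0, by linarith⟩ rfl]
    have : y n 0 * y n 1 * X (⟨(i : ℕ) - 2, by have := i.isLt; omega⟩ : Fin (n - 2)) -
        y n 0 ^ 2 * X (⟨(i : ℕ) - 2, by have := i.isLt; omega⟩ : Fin (n - 2)) * y n 2 =
        C (Ideal.Quotient.mk J (X 0 * X 1 - X 0 ^ 2 * X 2)) *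
          X (⟨(i : ℕ) - 2, by have := i.isLt; omega⟩ : Fin (n - 2)) := by
      simp only [y, map_sub, map_mul, map_pow]
      ring
    rw [this, mkJ_eq_zero memJ3, map_zero, zero_mul]
  · rw [f0_inl1 n ⟨1, by linarith⟩ rfl, f0_inr2 n i hi, f0_inl2 n i hi,
      f0_inr1 n ⟨1, by linarith⟩ rfl]
    have : y n 1 ^ 2 * X (⟨(i : ℕ) - 2, by have := i.isLt; omega⟩ : Fin (n - 2)) -
        y n 0 ^ 2 * X (⟨(i : ℕ) - 2, by have := i.isLt; omega⟩ : Fin (n - 2)) * y n 3 =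
        C (Ideal.Quotient.mk J (X 1 ^ 2 - X 0 ^ 2 * X 3)) *
          X (⟨(i : ℕ) - 2, by have := i.isLt; omega⟩ : Fin (n - 2)) := by
      simp only [y, map_sub, map_mul, map_pow]
      ring
    rw [this, mkJ_eq_zero memJ4, map_zero, zero_mul]
  · rw [f0_inl2 n i hi, f0_inr2 n j hj, f0_inl2 n j hj, f0_inr2 n i hi]
    ring

lemma vanishI : ∀ p ∈ I n hn, φ n p = 0 := by
  intro p hp
  have hle : I n hn ≤ RingHom.ker (φ n).toRingHom :=
    Ideal.span_le.mpr fun q hq => vanish n hn q hq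
  exact hle hp

def Φ : R n hn →ₐ[ℂ] T n := Ideal.Quotient.liftₐ (I n hn) (φ n) (vanishI n hn)

lemma Φ_mk (p : MvPolynomial (Fin n ⊕ Fin n) ℂ) :
    Φ n hn (Ideal.Quotient.mk (I n hn) p) = φ n p := by
  simp [Φ, Ideal.Quotient.liftₐ_apply]
  exact Ideal.Quotient.lift_mk _ _ _

/-- Variable assignment for the backwards map on the core `ℂ[x₁,x₂,u₁,u₂]`. -/
def g : Fin 4 → MvPolynomial (Fin n ⊕ Fin n) ℂ :=
  ![X (Sum.inl ⟨0, by linarith⟩), X (Sum.inl ⟨1, by linarith⟩),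
    X (Sum.inr ⟨0, by linarith⟩), X (Sum.inr ⟨1, by linarith⟩)]

def ψ₀ : MvPolynomial (Fin 4) ℂ →ₐ[ℂ] R n hn :=
  (Ideal.Quotient.mkₐ ℂ (I n hn)).comp (aeval (g n hn))

lemma mem1 : (X (Sum.inl ⟨0, by linarith⟩) * X (Sum.inr ⟨0, by linarith⟩) -
    X (Sum.inl ⟨1, by linarith⟩) : MvPolynomial (Fin n ⊕ Fin n) ℂ) ∈ I n hn :=
  Ideal.subset_span (by left; left; left; left; exact Or.inl rfl)

lemma mem2 : (X (Sum.inl ⟨0, by linarith⟩) * X (Sum.inr ⟨1, by linarith⟩) -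
    X (Sum.inl ⟨1, by linarith⟩) * X (Sum.inr ⟨0, by linarith⟩) :
    MvPolynomial (Fin n ⊕ Fin n) ℂ) ∈ I n hn :=
  Ideal.subset_span (by left; left; left; left; exact Or.inr rfl)

lemma mem3 (i : Fin n) (hi : 2 ≤ (i : ℕ)) :
    (X (Sum.inl ⟨0, by linarith⟩) ^ 2 * X (Sum.inr i) - X (Sum.inl i) :
      MvPolynomial (Fin n ⊕ Fin n) ℂ) ∈ I n hn :=
  Ideal.subset_span (by left; left; left; right; exact ⟨i, hi, rfl⟩)

lemma vanishJ : ∀ p ∈ J, ψ₀ n hn p = 0 := by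
  have h1 : ψ₀ n hn (X 0 * X 2 - X 1) = 0 := by
    simp only [ψ₀, AlgHom.coe_comp, Function.comp_apply, Ideal.Quotient.mkₐ_eq_mk,
      map_sub, map_mul, aeval_X, g, Matrix.cons_val_zero, Matrix.cons_val_one,
      Matrix.head_cons]
    rw [← map_mul, ← map_sub]
    exact Ideal.Quotient.eq_zero_iff_mem.mpr (mem1 n hn)
  have h2 : ψ₀ n hn (X 0 * X 3 - X 1 * X 2) = 0 := by
    simp only [ψ₀, AlgHom.coe_comp, Function.comp_apply, Ideal.Quotient.mkₐ_eq_mk,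
      map_sub, map_mul, aeval_X, g, Matrix.cons_val_zero, Matrix.cons_val_one,
      Matrix.cons_val_two, Matrix.cons_val_three, Matrix.tail_cons, Matrix.head_cons]
    rw [← map_mul, ← map_mul, ← map_sub]
    exact Ideal.Quotient.eq_zero_iff_mem.mpr (mem2 n hn)
  intro p hp
  have hle : J ≤ RingHom.ker (ψ₀ n hn).toRingHom := by
    refine Ideal.span_le.mpr ?_
    intro q hq
    simp only [Set.mem_insert_iff, Set.mem_singleton_iff] at hq
    simp only [SetLike.mem_coe, RingHom.mem_ker]
    rcases hq with rfl | rfl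
    · exact h1
    · exact h2
  exact hle hp

def ψ₁ : A →ₐ[ℂ] R n hn := Ideal.Quotient.liftₐ J (ψ₀ n hn) (vanishJ n hn)

def ψ : T n →ₐ[ℂ] R n hn :=
  aevalTower (ψ₁ n hn)
    (fun m : Fin (n - 2) =>
      Ideal.Quotient.mk (I n hn) (X (Sum.inr ⟨(m : ℕ) + 2, by have := m.isLt; omega⟩)))

lemma ψ_y (k : Fin 4) : ψ n hn (y n k) = Ideal.Quotient.mk (I n hn) (g n hn k) := by
  simp [ψ, y, aevalTower_C, ψ₁, Ideal.Quotient.liftₐ_apply, ψ₀]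
  exact (Ideal.Quotient.lift_mk _ _ _).trans (by simp)

lemma ψ_X (m : Fin (n - 2)) :
    ψ n hn (X m) =
      Ideal.Quotient.mk (I n hn) (X (Sum.inr ⟨(m : ℕ) + 2, by have := m.isLt; omega⟩)) := by
  simp [ψ, aevalTower_X]

lemma left_inv : (ψ n hn).comp (Φ n hn) = AlgHom.id ℂ (R n hn) := by
  apply Ideal.Quotient.algHom_ext
  apply MvPolynomial.algHom_ext
  intro s
  simp only [AlgHom.coe_comp, Function.comp_apply, Ideal.Quotient.mkₐ_eq_mk, AlgHom.coe_id,
    id_eq]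
  rw [Φ_mk]
  cases s with
  | inl i =>
    rcases Nat.lt_or_ge (i : ℕ) 2 with h2 | h2
    · interval_cases h : (i : ℕ)
      · rw [show φ n (X (Sum.inl i)) = y n 0 by simp only [φ, aeval_X]; exact f0_inl0 n i h,
          ψ_y]
        simp only [g, Matrix.cons_val_zero]
        congr 1
        exact congrArg (fun k => X (Sum.inl k)) (Fin.ext h.symm)
      · rw [show φ n (X (Sum.inl i)) = y n 1 by simp only [φ, aeval_X]; exact f0_inl1 n i h,
          ψ_y]
        simp only [g, Matrix.cons_val_one, Matrix.head_cons]
        congr 1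
        exact congrArg (fun k => X (Sum.inl k)) (Fin.ext h.symm)
    · rw [show φ n (X (Sum.inl i)) =
          y n 0 ^ 2 * X (⟨(i : ℕ) - 2, by have := i.isLt; omega⟩ : Fin (n - 2)) by
        simp only [φ, aeval_X]; exact f0_inl2 n i h2]
      rw [map_mul, map_pow, ψ_y, ψ_X]
      simp only [g, Matrix.cons_val_zero]
      rw [← map_pow, ← map_mul]
      rw [Ideal.Quotient.mk_eq_mk_iff_sub_mem]
      have hidx : (⟨((⟨(i : ℕ) - 2, by have := i.isLt; omega⟩ : Fin (n - 2)) : ℕ) + 2,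
          by have := i.isLt; simp; omega⟩ : Fin n) = i := by
        apply Fin.ext; simp; omega
      rw [hidx]
      exact mem3 n hn i h2
  | inr i =>
    rcases Nat.lt_or_ge (i : ℕ) 2 with h2 | h2
    · interval_cases h : (i : ℕ)
      · rw [show φ n (X (Sum.inr i)) = y n 2 by simp only [φ, aeval_X]; exact f0_inr0 n i h,
          ψ_y]
        simp only [g, Matrix.cons_val_two, Matrix.tail_cons, Matrix.head_cons]
        congr 1
        exact congrArg (fun k => X (Sum.inr k)) (Fin.ext h.symm)
      · rw [show φ n (X (Sum.inr i)) = y n 3 by simp only [φ, aeval_X]; exact f0_inr1 n i h,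
          ψ_y]
        simp only [g, Matrix.cons_val_three, Matrix.tail_cons, Matrix.head_cons]
        congr 1
        exact congrArg (fun k => X (Sum.inr k)) (Fin.ext h.symm)
    · rw [show φ n (X (Sum.inr i)) =
          X (⟨(i : ℕ) - 2, by have := i.isLt; omega⟩ : Fin (n - 2)) by
        simp only [φ, aeval_X]; exact f0_inr2 n i h2]
      rw [ψ_X]
      congr 1
      apply congrArg (fun k => X (Sum.inr k))
      apply Fin.ext; simp; omega

lemma right_inv : (Φ n hn).comp (ψ n hn) = AlgHom.id ℂ (T n) := by
  apply MvPolynomial.algHom_ext'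
  · apply Ideal.Quotient.algHom_ext
    apply MvPolynomial.algHom_ext
    intro k
    simp only [AlgHom.coe_comp, Function.comp_apply, Ideal.Quotient.mkₐ_eq_mk,
      IsScalarTower.coe_toAlgHom']
    have halg : (algebraMap A (T n)) (Ideal.Quotient.mk J (X k)) = y n k := rfl
    rw [halg]
    have : ψ n hn (y n k) = Ideal.Quotient.mk (I n hn) (g n hn k) := ψ_y n hn k
    rw [this, Φ_mk]
    fin_cases k
    · exact (aeval_X (f0 n) (Sum.inl ⟨0, by linarith⟩)).trans (f0_inl0 n ⟨0, by linarith⟩ rfl)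
    · exact (aeval_X (f0 n) (Sum.inl ⟨1, by linarith⟩)).trans (f0_inl1 n ⟨1, by linarith⟩ rfl)
    · exact (aeval_X (f0 n) (Sum.inr ⟨0, by linarith⟩)).trans (f0_inr0 n ⟨0, by linarith⟩ rfl)
    · exact (aeval_X (f0 n) (Sum.inr ⟨1, by linarith⟩)).trans (f0_inr1 n ⟨1, by linarith⟩ rfl)
  · intro m
    simp only [AlgHom.coe_comp, Function.comp_apply, AlgHom.coe_id, id_eq]
    rw [ψ_X, Φ_mk]
    have : φ n (X (Sum.inr (⟨(m : ℕ) + 2, by have := m.isLt; omega⟩ : Fin n))) =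
        X (⟨(m : ℕ) + 2 - 2, by have := m.isLt; omega⟩ : Fin (n - 2)) := by
      simp only [φ, aeval_X]
      exact f0_inr2 n _ (by simp)
    rw [this]
    exact congrArg X (Fin.ext (by simp))

def iso : R n hn ≃ₐ[ℂ] T n :=
  AlgEquiv.ofAlgHom (Φ n hn) (ψ n hn) (right_inv n hn) (left_inv n hn)

end Stmt10Aux

end

/-- Let `n ≥ 3`. In `ℂ[x₁,…,xₙ,u₁,…,uₙ]` (with `xₖ = X (Sum.inl ⟨k-1⟩)` and
`uₖ = X (Sum.inr ⟨k-1⟩)`), the quotient by the ideal generated by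
`x₁u₁−x₂`, `x₁u₂−x₂u₁`, and, for all `3 ≤ i, j ≤ n`, the elements
`x₁²uᵢ−xᵢ`, `x₁x₂uᵢ−xᵢu₁`, `x₂²uᵢ−xᵢu₂` and `xᵢuⱼ−xⱼuᵢ`, is isomorphic as a
`ℂ`-algebra to the polynomial ring in `n−2` variables over
`ℂ[x₁,x₂,u₁,u₂]/(x₁u₁−x₂, x₁u₂−x₂u₁)`. -/
theorem stmt10 (n : ℕ) (hn : 3 ≤ n) :
    Nonempty
      ((MvPolynomial (Fin n ⊕ Fin n) ℂ ⧸
          Ideal.span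
            (({X (Sum.inl ⟨0, by omega⟩) * X (Sum.inr ⟨0, by omega⟩) - X (Sum.inl ⟨1, by omega⟩),
               X (Sum.inl ⟨0, by omega⟩) * X (Sum.inr ⟨1, by omega⟩) -
                 X (Sum.inl ⟨1, by omega⟩) * X (Sum.inr ⟨0, by omega⟩)} ∪
              {p | ∃ i : Fin n, 2 ≤ (i : ℕ) ∧
                 p = X (Sum.inl ⟨0, by omega⟩) ^ 2 * X (Sum.inr i) - X (Sum.inl i)} ∪
              {p | ∃ i : Fin n, 2 ≤ (i : ℕ) ∧
                 p = X (Sum.inl ⟨0, by omega⟩) * X (Sum.inl ⟨1, by omega⟩) * X (Sum.inr i) -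
                   X (Sum.inl i) * X (Sum.inr ⟨0, by omega⟩)} ∪
              {p | ∃ i : Fin n, 2 ≤ (i : ℕ) ∧
                 p = X (Sum.inl ⟨1, by omega⟩) ^ 2 * X (Sum.inr i) -
                   X (Sum.inl i) * X (Sum.inr ⟨1, by omega⟩)} ∪
              {p | ∃ i j : Fin n, 2 ≤ (i : ℕ) ∧ 2 ≤ (j : ℕ) ∧
                 p = X (Sum.inl i) * X (Sum.inr j) - X (Sum.inl j) * X (Sum.inr i)} :
              Set (MvPolynomial (Fin n ⊕ Fin n) ℂ)))) ≃ₐ[ℂ]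
        MvPolynomial (Fin (n - 2))
          (MvPolynomial (Fin 4) ℂ ⧸
            Ideal.span {(X 0 * X 2 - X 1 : MvPolynomial (Fin 4) ℂ),
              X 0 * X 3 - X 1 * X 2})) := by
  exact ⟨Stmt10Aux.iso n hn⟩
end

section
/- Let n ≥ 3 and ℓ ≥ 1 be integers, and consider the polynomial ring ℂ[x₁,…,xₙ,u₁,u₃,…,uₙ] and the ideal generated by: x₁^ℓ − x₂u₁, and, for all 3 ≤ i, k ≤ n, the elements x₁^ℓuᵢ − xᵢu₁, xᵢ − x₂uᵢ and xᵢu_k − x_kuᵢ. Then the quotient ring is isomorphic as a ℂ-algebra to the polynomial ring in the n−2 variables u₃,…,uₙ over the ring ℂ[x₁,x₂,u₁]/(x₁^ℓ − x₂u₁). -/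
open MvPolynomial

noncomputable section Stmt13Aux

variable (n ℓ : ℕ)

abbrev S13R : Type := MvPolynomial (Fin 3) ℂ ⧸
  Ideal.span {(X 0 ^ ℓ - X 1 * X 2 : MvPolynomial (Fin 3) ℂ)}

abbrev S13B : Type := MvPolynomial (Fin (n - 2)) (S13R ℓ)

def s13fwdVar : Fin n ⊕ Fin (n - 1) → S13B n ℓ
  | Sum.inl a =>
      if h0 : (a : ℕ) = 0 then C (Ideal.Quotient.mk _ (X 0))
      else if h1 : (a : ℕ) = 1 then C (Ideal.Quotient.mk _ (X 1))
      else C (Ideal.Quotient.mk _ (X 1)) * X ⟨(a : ℕ) - 2, by have := a.isLt; omega⟩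
  | Sum.inr a =>
      if h0 : (a : ℕ) = 0 then C (Ideal.Quotient.mk _ (X 2))
      else X ⟨(a : ℕ) - 1, by have := a.isLt; omega⟩

def s13Set (hn : 3 ≤ n) : Set (MvPolynomial (Fin n ⊕ Fin (n - 1)) ℂ) :=
  ({X (Sum.inl ⟨0, by omega⟩) ^ ℓ -
       X (Sum.inl ⟨1, by omega⟩) * X (Sum.inr ⟨0, by omega⟩)} ∪
    {p | ∃ a : Fin (n - 1), 1 ≤ (a : ℕ) ∧
       p = X (Sum.inl ⟨0, by omega⟩) ^ ℓ * X (Sum.inr a) -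
         X (Sum.inl ⟨(a : ℕ) + 1, by have := a.isLt; omega⟩) *
           X (Sum.inr ⟨0, by omega⟩)} ∪
    {p | ∃ a : Fin (n - 1), 1 ≤ (a : ℕ) ∧
       p = X (Sum.inl ⟨(a : ℕ) + 1, by have := a.isLt; omega⟩) -
         X (Sum.inl ⟨1, by omega⟩) * X (Sum.inr a)} ∪
    {p | ∃ a b : Fin (n - 1), 1 ≤ (a : ℕ) ∧ 1 ≤ (b : ℕ) ∧
       p = X (Sum.inl ⟨(a : ℕ) + 1, by have := a.isLt; omega⟩) * X (Sum.inr b) -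
         X (Sum.inl ⟨(b : ℕ) + 1, by have := b.isLt; omega⟩) * X (Sum.inr a)})

variable (hn : 3 ≤ n)

def s13I : Ideal (MvPolynomial (Fin n ⊕ Fin (n - 1)) ℂ) := Ideal.span (s13Set n ℓ hn)

abbrev S13Q : Type := MvPolynomial (Fin n ⊕ Fin (n - 1)) ℂ ⧸ s13I n ℓ hn

theorem s13hq : (Ideal.Quotient.mk (Ideal.span {(X 0 ^ ℓ - X 1 * X 2 :
      MvPolynomial (Fin 3) ℂ)}) (X 0)) ^ ℓ =
    Ideal.Quotient.mk _ (X 1) * Ideal.Quotient.mk _ (X 2) := by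
  rw [← map_pow, ← map_mul, Ideal.Quotient.eq]
  exact Ideal.subset_span rfl

theorem s13Xeq {m : ℕ} {R : Type*} [CommSemiring R] (i j : ℕ) (hi : i < m) (hj : j < m)
    (h : i = j) : (X (⟨i, hi⟩ : Fin m) : MvPolynomial (Fin m) R) = X ⟨j, hj⟩ := by
  subst h; rfl

theorem s13kills : ∀ p ∈ s13Set n ℓ hn, aeval (s13fwdVar n ℓ) p = 0 := by
  have hC : (C ((Ideal.Quotient.mk _) (X 0)) : S13B n ℓ) ^ ℓ =
      C ((Ideal.Quotient.mk _) (X 1)) * C ((Ideal.Quotient.mk _) (X 2)) := by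
    rw [← map_pow, ← map_mul, s13hq]
  intro p hp
  rcases hp with ((h | h) | h) | h
  · rcases h with rfl
    simp only [map_sub, map_pow, map_mul, aeval_X, s13fwdVar, Fin.val_mk]
    norm_num [hC]
  · obtain ⟨a, ha, rfl⟩ := h
    have h1 : ¬((a:ℕ) = 0) := by omega
    have h2 : ¬((a:ℕ) + 1 = 0) := by omega
    have h3 : ¬((a:ℕ) + 1 = 1) := by omega
    simp only [map_sub, map_pow, map_mul, aeval_X, s13fwdVar, Fin.val_mk, h1, h2, h3,
      dite_false, dite_true, Nat.zero_ne_one, Nat.one_ne_zero, eq_self_iff_true]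
    rw [s13Xeq ((a:ℕ)+1-2) ((a:ℕ)-1) _ (by have := a.isLt; omega) (by omega), hC]
    ring
  · obtain ⟨a, ha, rfl⟩ := h
    have h1 : ¬((a:ℕ) = 0) := by omega
    have h2 : ¬((a:ℕ) + 1 = 0) := by omega
    have h3 : ¬((a:ℕ) + 1 = 1) := by omega
    simp only [map_sub, map_mul, aeval_X, s13fwdVar, Fin.val_mk, h1, h2, h3,
      dite_false, dite_true, Nat.zero_ne_one, Nat.one_ne_zero, eq_self_iff_true]
    rw [s13Xeq ((a:ℕ)+1-2) ((a:ℕ)-1) _ (by have := a.isLt; omega) (by omega)]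
    ring
  · obtain ⟨a, b, ha, hb, rfl⟩ := h
    have h1 : ¬((a:ℕ) = 0) := by omega
    have h2 : ¬((a:ℕ) + 1 = 0) := by omega
    have h3 : ¬((a:ℕ) + 1 = 1) := by omega
    have h4 : ¬((b:ℕ) = 0) := by omega
    have h5 : ¬((b:ℕ) + 1 = 0) := by omega
    have h6 : ¬((b:ℕ) + 1 = 1) := by omega
    simp only [map_sub, map_mul, aeval_X, s13fwdVar, Fin.val_mk, h1, h2, h3, h4, h5, h6,
      dite_false, dite_true, Nat.zero_ne_one, Nat.one_ne_zero, eq_self_iff_true]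
    rw [s13Xeq ((a:ℕ)+1-2) ((a:ℕ)-1) _ (by have := a.isLt; omega) (by omega),
      s13Xeq ((b:ℕ)+1-2) ((b:ℕ)-1) _ (by have := b.isLt; omega) (by omega)]
    ring

/-- forward map on the quotient -/
def s13phi : S13Q n ℓ hn →ₐ[ℂ] S13B n ℓ :=
  Ideal.Quotient.liftₐ _ (aeval (s13fwdVar n ℓ)) (fun p hp => by
    refine Submodule.span_induction ?_ ?_ ?_ ?_ hp
    · exact fun x hx => s13kills n ℓ hn x hx
    · simp
    · intro x y _ _ hx hy; simp [hx, hy]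
    · intro c x _ hx; simp [hx])

def s13psi0 : MvPolynomial (Fin 3) ℂ →ₐ[ℂ] S13Q n ℓ hn :=
  aeval ![Ideal.Quotient.mk _ (X (Sum.inl ⟨0, by omega⟩)),
    Ideal.Quotient.mk _ (X (Sum.inl ⟨1, by omega⟩)),
    Ideal.Quotient.mk _ (X (Sum.inr ⟨0, by omega⟩))]

theorem s13psi0kills (hℓ : 1 ≤ ℓ) :
    s13psi0 n ℓ hn (X 0 ^ ℓ - X 1 * X 2) = 0 := by
  simp only [s13psi0, map_sub, map_pow, map_mul, aeval_X]
  simp only [Matrix.cons_val_zero, Matrix.cons_val_one, Matrix.head_cons,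
    Matrix.cons_val_two, Matrix.tail_cons]
  rw [← map_pow, ← map_mul, ← map_sub, Ideal.Quotient.eq_zero_iff_mem]
  exact Ideal.subset_span (Or.inl (Or.inl (Or.inl rfl)))

def s13psi1 (hℓ : 1 ≤ ℓ) : S13R ℓ →ₐ[ℂ] S13Q n ℓ hn :=
  Ideal.Quotient.liftₐ _ (s13psi0 n ℓ hn) (fun p hp => by
    refine Submodule.span_induction ?_ ?_ ?_ ?_ hp
    · rintro x rfl; exact s13psi0kills n ℓ hn hℓ
    · simp
    · intro x y _ _ hx hy; simp [hx, hy]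
    · intro c x _ hx; simp [hx])

def s13psi (hℓ : 1 ≤ ℓ) : S13B n ℓ →ₐ[ℂ] S13Q n ℓ hn :=
  aevalTower (s13psi1 n ℓ hn hℓ)
    (fun a => Ideal.Quotient.mk _ (X (Sum.inr ⟨(a : ℕ) + 1, by have := a.isLt; omega⟩)))

theorem s13phi_mk (p : MvPolynomial (Fin n ⊕ Fin (n - 1)) ℂ) :
    s13phi n ℓ hn (Ideal.Quotient.mk _ p) = aeval (s13fwdVar n ℓ) p := rfl

theorem s13psi1_mk (hℓ : 1 ≤ ℓ) (p : MvPolynomial (Fin 3) ℂ) :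
    s13psi1 n ℓ hn hℓ (Ideal.Quotient.mk _ p) = s13psi0 n ℓ hn p := rfl


theorem s13XinlEq (i j : ℕ) (hi : i < n) (hj : j < n) (h : i = j) :
    (X (Sum.inl ⟨i, hi⟩) : MvPolynomial (Fin n ⊕ Fin (n - 1)) ℂ) = X (Sum.inl ⟨j, hj⟩) := by
  subst h; rfl

theorem s13XinrEq (i j : ℕ) (hi : i < n - 1) (hj : j < n - 1) (h : i = j) :
    (X (Sum.inr ⟨i, hi⟩) : MvPolynomial (Fin n ⊕ Fin (n - 1)) ℂ) = X (Sum.inr ⟨j, hj⟩) := by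
  subst h; rfl

theorem s13comp1 (hℓ : 1 ≤ ℓ) :
    (s13psi n ℓ hn hℓ).comp (s13phi n ℓ hn) = AlgHom.id ℂ (S13Q n ℓ hn) := by
  apply Ideal.Quotient.algHom_ext
  apply MvPolynomial.algHom_ext
  rintro (⟨av, hlt⟩ | ⟨av, hlt⟩)
  · by_cases h0 : av = 0
    · subst h0
      simp [s13phi_mk, s13psi, s13psi1_mk, s13psi0, s13fwdVar,
        Ideal.Quotient.liftₐ_apply, Ideal.Quotient.lift_mk, aevalTower_C]
    · by_cases h1 : av = 1
      · subst h1
        simp [s13phi_mk, s13psi, s13psi1_mk, s13psi0, s13fwdVar,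
          Ideal.Quotient.liftₐ_apply, Ideal.Quotient.lift_mk, aevalTower_C]
      · simp [s13phi_mk, s13psi, s13psi1_mk, s13psi0, s13fwdVar, h0, h1,
          Ideal.Quotient.liftₐ_apply, Ideal.Quotient.lift_mk, aevalTower_C, aevalTower_X]
        rw [s13XinrEq n (av - 2 + 1) (av - 1) (by omega) (by omega) (by omega), ← map_mul]
        have hgen : (X (Sum.inl ⟨av, hlt⟩) -
            X (Sum.inl ⟨1, by omega⟩) * X (Sum.inr ⟨av - 1, by omega⟩) :
            MvPolynomial (Fin n ⊕ Fin (n - 1)) ℂ) ∈ s13I n ℓ hn := by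
          apply Ideal.subset_span
          refine Or.inl (Or.inr ⟨⟨av - 1, by omega⟩, by simp; omega, ?_⟩)
          rw [s13XinlEq n av (av - 1 + 1) hlt (by omega) (by omega)]
        exact (Ideal.Quotient.eq.mpr hgen).symm
  · by_cases h0 : av = 0
    · subst h0
      simp [s13phi_mk, s13psi, s13psi1_mk, s13psi0, s13fwdVar,
        Ideal.Quotient.liftₐ_apply, Ideal.Quotient.lift_mk, aevalTower_C]
    · simp [s13phi_mk, s13psi, s13psi1_mk, s13psi0, s13fwdVar, h0,
        Ideal.Quotient.liftₐ_apply, Ideal.Quotient.lift_mk, aevalTower_X]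
      rw [s13XinrEq n (av - 1 + 1) av (by omega) hlt (by omega)]

theorem s13comp2 (hℓ : 1 ≤ ℓ) :
    (s13phi n ℓ hn).comp (s13psi n ℓ hn hℓ) = AlgHom.id ℂ (S13B n ℓ) := by
  apply MvPolynomial.algHom_ext'
  · apply Ideal.Quotient.algHom_ext
    apply MvPolynomial.algHom_ext
    intro i
    fin_cases i <;>
      simp [s13phi_mk, s13psi, s13psi1_mk, s13psi0, s13fwdVar, algebraMap_eq,
        Ideal.Quotient.liftₐ_apply, Ideal.Quotient.lift_mk, aevalTower_C]
  · intro a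
    simp [s13phi_mk, s13psi, s13psi1_mk, s13psi0, s13fwdVar,
      Ideal.Quotient.liftₐ_apply, Ideal.Quotient.lift_mk, aevalTower_C, aevalTower_X]

end Stmt13Aux

/-- Let `n ≥ 3` and `ℓ ≥ 1`. In `ℂ[x₁,…,xₙ,u₁,u₃,u₄,…,uₙ]` (with
`xₖ = X (Sum.inl ⟨k-1⟩)` for `1 ≤ k ≤ n`, `u₁ = X (Sum.inr ⟨0⟩)` and
`uₖ = X (Sum.inr ⟨k-2⟩)` for `3 ≤ k ≤ n`), the quotient by the ideal generated by
`x₁^ℓ − x₂u₁` and, for all `3 ≤ i, k ≤ n`, the elements `x₁^ℓuᵢ − xᵢu₁`, `xᵢ − x₂uᵢ`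
and `xᵢu_k − x_kuᵢ`, is isomorphic as a `ℂ`-algebra to the polynomial ring in `n−2`
variables over `ℂ[x₁,x₂,u₁]/(x₁^ℓ − x₂u₁)` (there: `x₁ = X 0`, `x₂ = X 1`, `u₁ = X 2`). -/
theorem stmt13 (n ℓ : ℕ) (hn : 3 ≤ n) (hℓ : 1 ≤ ℓ) :
    Nonempty
      ((MvPolynomial (Fin n ⊕ Fin (n - 1)) ℂ ⧸
          Ideal.span
            (({X (Sum.inl ⟨0, by omega⟩) ^ ℓ -
                 X (Sum.inl ⟨1, by omega⟩) * X (Sum.inr ⟨0, by omega⟩)} ∪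
              {p | ∃ a : Fin (n - 1), 1 ≤ (a : ℕ) ∧
                 p = X (Sum.inl ⟨0, by omega⟩) ^ ℓ * X (Sum.inr a) -
                   X (Sum.inl ⟨(a : ℕ) + 1, by have := a.isLt; omega⟩) *
                     X (Sum.inr ⟨0, by omega⟩)} ∪
              {p | ∃ a : Fin (n - 1), 1 ≤ (a : ℕ) ∧
                 p = X (Sum.inl ⟨(a : ℕ) + 1, by have := a.isLt; omega⟩) -
                   X (Sum.inl ⟨1, by omega⟩) * X (Sum.inr a)} ∪
              {p | ∃ a b : Fin (n - 1), 1 ≤ (a : ℕ) ∧ 1 ≤ (b : ℕ) ∧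
                 p = X (Sum.inl ⟨(a : ℕ) + 1, by have := a.isLt; omega⟩) * X (Sum.inr b) -
                   X (Sum.inl ⟨(b : ℕ) + 1, by have := b.isLt; omega⟩) * X (Sum.inr a)} :
              Set (MvPolynomial (Fin n ⊕ Fin (n - 1)) ℂ)))) ≃ₐ[ℂ]
        MvPolynomial (Fin (n - 2))
          (MvPolynomial (Fin 3) ℂ ⧸
            Ideal.span {(X 0 ^ ℓ - X 1 * X 2 : MvPolynomial (Fin 3) ℂ)})) := by
  exact ⟨AlgEquiv.ofAlgHom (s13phi n ℓ hn) (s13psi n ℓ hn hℓ)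
    (s13comp2 n ℓ hn hℓ) (s13comp1 n ℓ hn hℓ)⟩
end
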